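/- arXiv:math/0410557 — 6 statements merged into one kernel-verified Lean document; each statement's English description precedes it below -/
import Mathlib

section
/- Let Ω ⊆ ℝ² be open and let u : Ω → ℝ be a C³ solution of the two-dimensional minimal surface equation E(u) = 0 on Ω. Define v : Ω → ℝ by v(x,y) = y·∂ₓu(x,y) − x·∂_yu(x,y) (the rotation symmetry φ₃¹²). Then for every point (x,y) ∈ Ω, the function ε ↦ E(u + εv)(x,y) is differentiable at ε = 0 with derivative 0; i.e., the linearization of the minimal surface equation at u annihilates v. -/
/-- Partial derivative in the `x` direction of a function on `ℝ²`. -/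
noncomputable def px (f : ℝ × ℝ → ℝ) (z : ℝ × ℝ) : ℝ := fderiv ℝ f z (1, 0)

/-- Partial derivative in the `y` direction of a function on `ℝ²`. -/
noncomputable def py (f : ℝ × ℝ → ℝ) (z : ℝ × ℝ) : ℝ := fderiv ℝ f z (0, 1)

/-- The two-dimensional minimal surface operator
`E(w) = (1 + w_y²)·w_xx − 2·w_x·w_y·w_xy + (1 + w_x²)·w_yy`. -/
noncomputable def msOp (w : ℝ × ℝ → ℝ) (z : ℝ × ℝ) : ℝ :=
  (1 + (py w z) ^ 2) * px (px w) z - 2 * px w z * py w z * py (px w) z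
    + (1 + (px w z) ^ 2) * py (py w) z

open Filter Topology

/-- Directional partial derivative. -/
noncomputable def pd (e : ℝ × ℝ) (f : ℝ × ℝ → ℝ) (z : ℝ × ℝ) : ℝ := fderiv ℝ f z e

lemma px_eq_pd (f : ℝ × ℝ → ℝ) : px f = pd (1,0) f := rfl
lemma py_eq_pd (f : ℝ × ℝ → ℝ) : py f = pd (0,1) f := rfl

section PdLemmas

variable {f g : ℝ × ℝ → ℝ} {z : ℝ × ℝ} {e : ℝ × ℝ} {c : ℝ}

lemma pd_congr (h : f =ᶠ[𝓝 z] g) : pd e f z = pd e g z := by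
  unfold pd; rw [h.fderiv_eq]

lemma pd_const : pd e (fun _ => c) z = 0 := by unfold pd; simp

lemma pd_add (hf : DifferentiableAt ℝ f z) (hg : DifferentiableAt ℝ g z) :
    pd e (fun w => f w + g w) z = pd e f z + pd e g z := by
  unfold pd; rw [fderiv_fun_add hf hg]; rfl

lemma pd_sub (hf : DifferentiableAt ℝ f z) (hg : DifferentiableAt ℝ g z) :
    pd e (fun w => f w - g w) z = pd e f z - pd e g z := by
  unfold pd; rw [fderiv_fun_sub hf hg]; rfl

lemma pd_const_mul (hg : DifferentiableAt ℝ g z) (c : ℝ) :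
    pd e (fun w => c * g w) z = c * pd e g z := by
  unfold pd; rw [fderiv_const_mul hg c]; rfl

lemma pd_const_add (hg : DifferentiableAt ℝ g z) (c : ℝ) :
    pd e (fun w => c + g w) z = pd e g z := by
  unfold pd; rw [fderiv_const_add]

lemma pd_mul (hf : DifferentiableAt ℝ f z) (hg : DifferentiableAt ℝ g z) :
    pd e (fun w => f w * g w) z = f z * pd e g z + g z * pd e f z := by
  unfold pd; rw [fderiv_fun_mul hf hg]; rfl

lemma pd_fst : pd e (fun w : ℝ × ℝ => w.1) z = e.1 := by
  unfold pd; rw [fderiv_fst]; rfl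

lemma pd_snd : pd e (fun w : ℝ × ℝ => w.2) z = e.2 := by
  unfold pd; rw [fderiv_snd]; rfl

lemma pd_one_add_sq (hg : DifferentiableAt ℝ g z) :
    pd e (fun w => 1 + g w ^ 2) z = 2 * g z * pd e g z := by
  have h2 : (fun w => 1 + g w ^ 2) = fun w => 1 + g w * g w := by funext w; ring
  rw [h2, pd_const_add (hg.fun_mul hg), pd_mul hg hg]; ring

lemma contDiffOn_pd {n : ℕ} {Ω : Set (ℝ × ℝ)} (hΩ : IsOpen Ω)
    (hf : ContDiffOn ℝ (n + 1) f Ω) : ContDiffOn ℝ n (pd e f) Ω :=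
  (hf.fderiv_of_isOpen hΩ (le_refl _)).clm_apply contDiffOn_const

lemma pd_comm (hf : ContDiffAt ℝ 2 f z) (e₁ e₂ : ℝ × ℝ) :
    pd e₁ (pd e₂ f) z = pd e₂ (pd e₁ f) z := by
  have hdf : DifferentiableAt ℝ (fderiv ℝ f) z :=
    (hf.fderiv_right (m := 1) (by norm_num)).differentiableAt one_ne_zero
  have hsymm := hf.isSymmSndFDerivAt (by simp)
  have key : ∀ d₁ d₂ : ℝ × ℝ, pd d₁ (pd d₂ f) z = fderiv ℝ (fderiv ℝ f) z d₁ d₂ := by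
    intro d₁ d₂
    unfold pd
    rw [fderiv_clm_apply hdf (differentiableAt_const _)]
    simp
  rw [key, key, hsymm.eq]

end PdLemmas

section Main

variable {Ω : Set (ℝ × ℝ)} {u : ℝ × ℝ → ℝ} {z : ℝ × ℝ}

/-- The rotation vector field `v = y uₓ - x u_y`. -/
noncomputable def rotV (u : ℝ × ℝ → ℝ) : ℝ × ℝ → ℝ :=
  fun w => w.2 * pd (1,0) u w - w.1 * pd (0,1) u w

lemma rotV_contDiffOn (hΩ : IsOpen Ω) (hu : ContDiffOn ℝ 3 u Ω) :
    ContDiffOn ℝ 2 (rotV u) Ω := by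
  have hu3 : ContDiffOn ℝ ((2:ℕ) + 1) u Ω := by exact_mod_cast hu
  have hux : ContDiffOn ℝ (2:ℕ) (pd (1,0) u) Ω := contDiffOn_pd hΩ hu3
  have huy : ContDiffOn ℝ (2:ℕ) (pd (0,1) u) Ω := contDiffOn_pd hΩ hu3
  exact (contDiff_snd.contDiffOn.mul hux).sub (contDiff_fst.contDiffOn.mul huy)

end Main

section Main2

variable {Ω : Set (ℝ × ℝ)} {u : ℝ × ℝ → ℝ} {z : ℝ × ℝ}

lemma diffOn_of_contDiffOn {n : ℕ} {f : ℝ × ℝ → ℝ} (hΩ : IsOpen Ω)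
    (hf : ContDiffOn ℝ (n+1) f Ω) : ∀ w ∈ Ω, DifferentiableAt ℝ f w := fun w hw =>
  (hf.contDiffAt (hΩ.mem_nhds hw)).differentiableAt (by simp)

lemma pd_rotV_x (hΩ : IsOpen Ω) (hu : ContDiffOn ℝ 3 u Ω) :
    ∀ w ∈ Ω, pd (1,0) (rotV u) w =
      w.2 * pd (1,0) (pd (1,0) u) w - pd (0,1) u w - w.1 * pd (0,1) (pd (1,0) u) w := by
  intro w hw
  have hu3 : ContDiffOn ℝ ((2:ℕ) + 1) u Ω := by exact_mod_cast hu
  have hux : ContDiffOn ℝ ((1:ℕ)+1) (pd (1,0) u) Ω := contDiffOn_pd hΩ hu3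
  have huy : ContDiffOn ℝ ((1:ℕ)+1) (pd (0,1) u) Ω := contDiffOn_pd hΩ hu3
  have hdx : DifferentiableAt ℝ (pd (1,0) u) w := diffOn_of_contDiffOn hΩ hux w hw
  have hdy : DifferentiableAt ℝ (pd (0,1) u) w := diffOn_of_contDiffOn hΩ huy w hw
  have hsym : pd (1,0) (pd (0,1) u) w = pd (0,1) (pd (1,0) u) w :=
    pd_comm ((hu.contDiffAt (hΩ.mem_nhds hw)).of_le (by norm_num)) _ _
  unfold rotV
  rw [pd_sub (differentiableAt_snd.fun_mul hdx) (differentiableAt_fst.fun_mul hdy),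
    pd_mul differentiableAt_snd hdx, pd_mul differentiableAt_fst hdy, pd_fst, pd_snd,
    hsym]
  ring

lemma pd_rotV_y (hΩ : IsOpen Ω) (hu : ContDiffOn ℝ 3 u Ω) :
    ∀ w ∈ Ω, pd (0,1) (rotV u) w =
      pd (1,0) u w + w.2 * pd (0,1) (pd (1,0) u) w - w.1 * pd (0,1) (pd (0,1) u) w := by
  intro w hw
  have hu3 : ContDiffOn ℝ ((2:ℕ) + 1) u Ω := by exact_mod_cast hu
  have hux : ContDiffOn ℝ ((1:ℕ)+1) (pd (1,0) u) Ω := contDiffOn_pd hΩ hu3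
  have huy : ContDiffOn ℝ ((1:ℕ)+1) (pd (0,1) u) Ω := contDiffOn_pd hΩ hu3
  have hdx : DifferentiableAt ℝ (pd (1,0) u) w := diffOn_of_contDiffOn hΩ hux w hw
  have hdy : DifferentiableAt ℝ (pd (0,1) u) w := diffOn_of_contDiffOn hΩ huy w hw
  unfold rotV
  rw [pd_sub (differentiableAt_snd.fun_mul hdx) (differentiableAt_fst.fun_mul hdy),
    pd_mul differentiableAt_snd hdx, pd_mul differentiableAt_fst hdy, pd_fst, pd_snd]
  ring

end Main2

section Main3

variable {Ω : Set (ℝ × ℝ)} {u : ℝ × ℝ → ℝ} {z : ℝ × ℝ}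

lemma pdpd_rotV (hΩ : IsOpen Ω) (hu : ContDiffOn ℝ 3 u Ω) (hz : z ∈ Ω) :
    pd (1,0) (pd (1,0) (rotV u)) z =
        z.2 * pd (1,0) (pd (1,0) (pd (1,0) u)) z - 2 * pd (0,1) (pd (1,0) u) z
          - z.1 * pd (0,1) (pd (1,0) (pd (1,0) u)) z
    ∧ pd (0,1) (pd (1,0) (rotV u)) z =
        pd (1,0) (pd (1,0) u) z + z.2 * pd (0,1) (pd (1,0) (pd (1,0) u)) z
          - pd (0,1) (pd (0,1) u) z - z.1 * pd (0,1) (pd (0,1) (pd (1,0) u)) z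
    ∧ pd (0,1) (pd (0,1) (rotV u)) z =
        2 * pd (0,1) (pd (1,0) u) z + z.2 * pd (0,1) (pd (0,1) (pd (1,0) u)) z
          - z.1 * pd (0,1) (pd (0,1) (pd (0,1) u)) z := by
  have hΩz : Ω ∈ 𝓝 z := hΩ.mem_nhds hz
  have hu3 : ContDiffOn ℝ ((2:ℕ) + 1) u Ω := by exact_mod_cast hu
  have hux : ContDiffOn ℝ ((1:ℕ)+1) (pd (1,0) u) Ω := contDiffOn_pd hΩ hu3
  have huy : ContDiffOn ℝ ((1:ℕ)+1) (pd (0,1) u) Ω := contDiffOn_pd hΩ hu3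
  -- second derivatives of u, C¹ on Ω
  have hP : ContDiffOn ℝ ((0:ℕ)+1) (pd (1,0) (pd (1,0) u)) Ω := contDiffOn_pd hΩ hux
  have hQ : ContDiffOn ℝ ((0:ℕ)+1) (pd (0,1) (pd (1,0) u)) Ω := contDiffOn_pd hΩ hux
  have hR : ContDiffOn ℝ ((0:ℕ)+1) (pd (0,1) (pd (0,1) u)) Ω := contDiffOn_pd hΩ huy
  have hdP : DifferentiableAt ℝ (pd (1,0) (pd (1,0) u)) z := diffOn_of_contDiffOn hΩ hP z hz
  have hdQ : DifferentiableAt ℝ (pd (0,1) (pd (1,0) u)) z := diffOn_of_contDiffOn hΩ hQ z hz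
  have hdR : DifferentiableAt ℝ (pd (0,1) (pd (0,1) u)) z := diffOn_of_contDiffOn hΩ hR z hz
  have hdx : DifferentiableAt ℝ (pd (1,0) u) z := diffOn_of_contDiffOn hΩ hux z hz
  have hdy : DifferentiableAt ℝ (pd (0,1) u) z := diffOn_of_contDiffOn hΩ huy z hz
  -- eventual identities for first derivatives of rotV
  have hex : pd (1,0) (rotV u) =ᶠ[𝓝 z] fun w =>
      w.2 * pd (1,0) (pd (1,0) u) w - pd (0,1) u w - w.1 * pd (0,1) (pd (1,0) u) w :=
    eventually_of_mem hΩz (pd_rotV_x hΩ hu)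
  have hey : pd (0,1) (rotV u) =ᶠ[𝓝 z] fun w =>
      pd (1,0) u w + w.2 * pd (0,1) (pd (1,0) u) w - w.1 * pd (0,1) (pd (0,1) u) w :=
    eventually_of_mem hΩz (pd_rotV_y hΩ hu)
  -- symmetry facts at z
  have hsymu : ∀ d₁ d₂ : ℝ × ℝ, pd d₁ (pd d₂ u) z = pd d₂ (pd d₁ u) z :=
    pd_comm ((hu.contDiffAt hΩz).of_le (by norm_num))
  have hsymx : ∀ d₁ d₂ : ℝ × ℝ, pd d₁ (pd d₂ (pd (1,0) u)) z = pd d₂ (pd d₁ (pd (1,0) u)) z :=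
    pd_comm (hux.contDiffAt hΩz)
  refine ⟨?_, ?_, ?_⟩
  · rw [pd_congr hex,
      pd_sub ((differentiableAt_snd.fun_mul hdP).fun_sub hdy) (differentiableAt_fst.fun_mul hdQ),
      pd_sub (differentiableAt_snd.fun_mul hdP) hdy,
      pd_mul differentiableAt_snd hdP, pd_mul differentiableAt_fst hdQ, pd_fst, pd_snd,
      hsymu (1,0) (0,1), hsymx (1,0) (0,1)]
    ring
  · rw [pd_congr hex,
      pd_sub ((differentiableAt_snd.fun_mul hdP).fun_sub hdy) (differentiableAt_fst.fun_mul hdQ),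
      pd_sub (differentiableAt_snd.fun_mul hdP) hdy,
      pd_mul differentiableAt_snd hdP, pd_mul differentiableAt_fst hdQ, pd_fst, pd_snd]
    ring
  · rw [pd_congr hey,
      pd_sub (hdx.fun_add (differentiableAt_snd.fun_mul hdQ)) (differentiableAt_fst.fun_mul hdR),
      pd_add hdx (differentiableAt_snd.fun_mul hdQ),
      pd_mul differentiableAt_snd hdQ, pd_mul differentiableAt_fst hdR, pd_fst, pd_snd,
      hsymu (0,1) (1,0)]
    ring

end Main3

section Main4

variable {Ω : Set (ℝ × ℝ)} {u : ℝ × ℝ → ℝ} {z : ℝ × ℝ}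

lemma msOp_fun_eq (u : ℝ × ℝ → ℝ) : msOp u = fun w =>
    (1 + (pd (0,1) u w) ^ 2) * pd (1,0) (pd (1,0) u) w
      - 2 * pd (1,0) u w * pd (0,1) u w * pd (0,1) (pd (1,0) u) w
      + (1 + (pd (1,0) u w) ^ 2) * pd (0,1) (pd (0,1) u) w := rfl

lemma msOp_pd_eq_zero (hΩ : IsOpen Ω) (hsol : ∀ w ∈ Ω, msOp u w = 0) (hz : z ∈ Ω)
    (e : ℝ × ℝ) : pd e (msOp u) z = 0 := by
  have : msOp u =ᶠ[𝓝 z] (fun _ => (0:ℝ)) := eventually_of_mem (hΩ.mem_nhds hz) hsol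
  rw [pd_congr this, pd_const]

lemma msOp_pd_expand (hΩ : IsOpen Ω) (hu : ContDiffOn ℝ 3 u Ω) (hz : z ∈ Ω) (e : ℝ × ℝ) :
    pd e (msOp u) z =
      2 * pd (0,1) u z * pd e (pd (0,1) u) z * pd (1,0) (pd (1,0) u) z
        + (1 + (pd (0,1) u z)^2) * pd e (pd (1,0) (pd (1,0) u)) z
      - (2 * pd (1,0) u z * pd e (pd (0,1) u) z
          + pd (0,1) u z * (2 * pd e (pd (1,0) u) z)) * pd (0,1) (pd (1,0) u) z
      - 2 * pd (1,0) u z * pd (0,1) u z * pd e (pd (0,1) (pd (1,0) u)) z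
      + 2 * pd (1,0) u z * pd e (pd (1,0) u) z * pd (0,1) (pd (0,1) u) z
        + (1 + (pd (1,0) u z)^2) * pd e (pd (0,1) (pd (0,1) u)) z := by
  have hΩz : Ω ∈ 𝓝 z := hΩ.mem_nhds hz
  have hu3 : ContDiffOn ℝ ((2:ℕ) + 1) u Ω := by exact_mod_cast hu
  have hux : ContDiffOn ℝ ((1:ℕ)+1) (pd (1,0) u) Ω := contDiffOn_pd hΩ hu3
  have huy : ContDiffOn ℝ ((1:ℕ)+1) (pd (0,1) u) Ω := contDiffOn_pd hΩ hu3
  have hP : ContDiffOn ℝ ((0:ℕ)+1) (pd (1,0) (pd (1,0) u)) Ω := contDiffOn_pd hΩ hux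
  have hQ : ContDiffOn ℝ ((0:ℕ)+1) (pd (0,1) (pd (1,0) u)) Ω := contDiffOn_pd hΩ hux
  have hR : ContDiffOn ℝ ((0:ℕ)+1) (pd (0,1) (pd (0,1) u)) Ω := contDiffOn_pd hΩ huy
  have hdP : DifferentiableAt ℝ (pd (1,0) (pd (1,0) u)) z := diffOn_of_contDiffOn hΩ hP z hz
  have hdQ : DifferentiableAt ℝ (pd (0,1) (pd (1,0) u)) z := diffOn_of_contDiffOn hΩ hQ z hz
  have hdR : DifferentiableAt ℝ (pd (0,1) (pd (0,1) u)) z := diffOn_of_contDiffOn hΩ hR z hz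
  have hdx : DifferentiableAt ℝ (pd (1,0) u) z := diffOn_of_contDiffOn hΩ hux z hz
  have hdy : DifferentiableAt ℝ (pd (0,1) u) z := diffOn_of_contDiffOn hΩ huy z hz
  have hT1 : DifferentiableAt ℝ (fun w => (1 + (pd (0,1) u w) ^ 2) * pd (1,0) (pd (1,0) u) w) z :=
    (((hdy.fun_pow 2).const_add 1).fun_mul hdP)
  have h12 : DifferentiableAt ℝ (fun w => 2 * pd (1,0) u w * pd (0,1) u w) z :=
    (hdx.const_mul 2).fun_mul hdy
  have hT2 : DifferentiableAt ℝ
      (fun w => 2 * pd (1,0) u w * pd (0,1) u w * pd (0,1) (pd (1,0) u) w) z := h12.fun_mul hdQ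
  have hT3 : DifferentiableAt ℝ (fun w => (1 + (pd (1,0) u w) ^ 2) * pd (0,1) (pd (0,1) u) w) z :=
    (((hdx.fun_pow 2).const_add 1).fun_mul hdR)
  rw [msOp_fun_eq u, pd_add (hT1.fun_sub hT2) hT3, pd_sub hT1 hT2,
    pd_mul (((hdy.fun_pow 2).const_add 1)) hdP, pd_one_add_sq hdy,
    pd_mul h12 hdQ, pd_mul (hdx.const_mul 2) hdy, pd_const_mul hdx 2,
    pd_mul (((hdx.fun_pow 2).const_add 1)) hdR, pd_one_add_sq hdx]
  ring

end Main4

section Main5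

variable {Ω : Set (ℝ × ℝ)} {u : ℝ × ℝ → ℝ} {z : ℝ × ℝ}

lemma pde_x (hΩ : IsOpen Ω) (hu : ContDiffOn ℝ 3 u Ω) (hsol : ∀ w ∈ Ω, msOp u w = 0)
    (hz : z ∈ Ω) :
    2 * pd (0,1) u z * pd (0,1) (pd (1,0) u) z * pd (1,0) (pd (1,0) u) z
      + (1 + (pd (0,1) u z)^2) * pd (1,0) (pd (1,0) (pd (1,0) u)) z
    - (2 * pd (1,0) u z * pd (0,1) (pd (1,0) u) z
        + pd (0,1) u z * (2 * pd (1,0) (pd (1,0) u) z)) * pd (0,1) (pd (1,0) u) z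
    - 2 * pd (1,0) u z * pd (0,1) u z * pd (0,1) (pd (1,0) (pd (1,0) u)) z
    + 2 * pd (1,0) u z * pd (1,0) (pd (1,0) u) z * pd (0,1) (pd (0,1) u) z
      + (1 + (pd (1,0) u z)^2) * pd (0,1) (pd (0,1) (pd (1,0) u)) z = 0 := by
  have hΩz : Ω ∈ 𝓝 z := hΩ.mem_nhds hz
  have hu3 : ContDiffOn ℝ ((2:ℕ) + 1) u Ω := by exact_mod_cast hu
  have hux : ContDiffOn ℝ ((1:ℕ)+1) (pd (1,0) u) Ω := contDiffOn_pd hΩ hu3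
  have huy : ContDiffOn ℝ ((1:ℕ)+1) (pd (0,1) u) Ω := contDiffOn_pd hΩ hu3
  have hsymu : ∀ d₁ d₂ : ℝ × ℝ, pd d₁ (pd d₂ u) z = pd d₂ (pd d₁ u) z :=
    pd_comm ((hu.contDiffAt hΩz).of_le (by norm_num))
  have hsymx : ∀ d₁ d₂ : ℝ × ℝ, pd d₁ (pd d₂ (pd (1,0) u)) z = pd d₂ (pd d₁ (pd (1,0) u)) z :=
    pd_comm (hux.contDiffAt hΩz)
  have hsymy : ∀ d₁ d₂ : ℝ × ℝ, pd d₁ (pd d₂ (pd (0,1) u)) z = pd d₂ (pd d₁ (pd (0,1) u)) z :=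
    pd_comm (huy.contDiffAt hΩz)
  have hsymfun : pd (1,0) (pd (0,1) u) =ᶠ[𝓝 z] pd (0,1) (pd (1,0) u) :=
    eventually_of_mem hΩz (fun w hw =>
      pd_comm ((hu.contDiffAt (hΩ.mem_nhds hw)).of_le (by norm_num)) _ _)
  have key := msOp_pd_expand hΩ hu hz (1,0)
  rw [msOp_pd_eq_zero hΩ hsol hz] at key
  rw [hsymu (1,0) (0,1), hsymx (1,0) (0,1)] at key
  rw [show pd (1,0) (pd (0,1) (pd (0,1) u)) z = pd (0,1) (pd (0,1) (pd (1,0) u)) z by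
    rw [hsymy (1,0) (0,1)]; exact pd_congr hsymfun] at key
  linarith [key]

lemma pde_y (hΩ : IsOpen Ω) (hu : ContDiffOn ℝ 3 u Ω) (hsol : ∀ w ∈ Ω, msOp u w = 0)
    (hz : z ∈ Ω) :
    2 * pd (0,1) u z * pd (0,1) (pd (0,1) u) z * pd (1,0) (pd (1,0) u) z
      + (1 + (pd (0,1) u z)^2) * pd (0,1) (pd (1,0) (pd (1,0) u)) z
    - (2 * pd (1,0) u z * pd (0,1) (pd (0,1) u) z
        + pd (0,1) u z * (2 * pd (0,1) (pd (1,0) u) z)) * pd (0,1) (pd (1,0) u) z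
    - 2 * pd (1,0) u z * pd (0,1) u z * pd (0,1) (pd (0,1) (pd (1,0) u)) z
    + 2 * pd (1,0) u z * pd (0,1) (pd (1,0) u) z * pd (0,1) (pd (0,1) u) z
      + (1 + (pd (1,0) u z)^2) * pd (0,1) (pd (0,1) (pd (0,1) u)) z = 0 := by
  have key := msOp_pd_expand hΩ hu hz (0,1)
  rw [msOp_pd_eq_zero hΩ hsol hz] at key
  linarith [key]

/-- Derivative at 0 of the cubic polynomial in ε arising from the expansion. -/
lemma hasDerivAt_msPoly (a b p q r A B P Q R : ℝ) :
    HasDerivAt (fun ε : ℝ =>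
        (1 + (b + ε * B) ^ 2) * (p + ε * P)
          - 2 * (a + ε * A) * (b + ε * B) * (q + ε * Q)
          + (1 + (a + ε * A) ^ 2) * (r + ε * R))
      (2 * b * B * p + (1 + b ^ 2) * P - 2 * (A * b + a * B) * q - 2 * a * b * Q
        + 2 * a * A * r + (1 + a ^ 2) * R) 0 := by
  have hlin : ∀ c d : ℝ, HasDerivAt (fun ε : ℝ => c + ε * d) d 0 := by
    intro c d
    simpa using ((hasDerivAt_id (0:ℝ)).mul_const d).const_add c
  have H := ((((((hlin b B).fun_pow 2).const_add 1).fun_mul (hlin p P)).fun_sub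
      ((((hlin a A).const_mul 2).fun_mul (hlin b B)).fun_mul (hlin q Q))).fun_add
      ((((hlin a A).fun_pow 2).const_add 1).fun_mul (hlin r R)))
  refine H.congr_deriv ?_
  norm_num
  ring

end Main5

section Main6

variable {Ω : Set (ℝ × ℝ)} {u : ℝ × ℝ → ℝ} {z : ℝ × ℝ}

lemma msOp_expand (hΩ : IsOpen Ω) (hu : ContDiffOn ℝ 3 u Ω) (hz : z ∈ Ω) (ε : ℝ) :
    msOp (fun w => u w + ε * rotV u w) z =
      (1 + (pd (0,1) u z + ε * pd (0,1) (rotV u) z) ^ 2)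
          * (pd (1,0) (pd (1,0) u) z + ε * pd (1,0) (pd (1,0) (rotV u)) z)
        - 2 * (pd (1,0) u z + ε * pd (1,0) (rotV u) z)
          * (pd (0,1) u z + ε * pd (0,1) (rotV u) z)
          * (pd (0,1) (pd (1,0) u) z + ε * pd (0,1) (pd (1,0) (rotV u)) z)
        + (1 + (pd (1,0) u z + ε * pd (1,0) (rotV u) z) ^ 2)
          * (pd (0,1) (pd (0,1) u) z + ε * pd (0,1) (pd (0,1) (rotV u)) z) := by
  have hΩz : Ω ∈ 𝓝 z := hΩ.mem_nhds hz
  have hu3 : ContDiffOn ℝ ((2:ℕ) + 1) u Ω := by exact_mod_cast hu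
  have hv2 : ContDiffOn ℝ ((1:ℕ) + 1) (rotV u) Ω := by
    exact_mod_cast rotV_contDiffOn hΩ hu
  have hud : ∀ w ∈ Ω, DifferentiableAt ℝ u w := diffOn_of_contDiffOn hΩ hu3
  have hvd : ∀ w ∈ Ω, DifferentiableAt ℝ (rotV u) w := diffOn_of_contDiffOn hΩ hv2
  have hux : ContDiffOn ℝ ((1:ℕ)+1) (pd (1,0) u) Ω := contDiffOn_pd hΩ hu3
  have huy : ContDiffOn ℝ ((1:ℕ)+1) (pd (0,1) u) Ω := contDiffOn_pd hΩ hu3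
  have hvx : ContDiffOn ℝ ((0:ℕ)+1) (pd (1,0) (rotV u)) Ω := contDiffOn_pd hΩ hv2
  have hvy : ContDiffOn ℝ ((0:ℕ)+1) (pd (0,1) (rotV u)) Ω := contDiffOn_pd hΩ hv2
  -- first-order expansions on Ω
  have h1 : ∀ (e : ℝ × ℝ), ∀ w ∈ Ω, pd e (fun w => u w + ε * rotV u w) w =
      pd e u w + ε * pd e (rotV u) w := by
    intro e w hw
    rw [pd_add (hud w hw) ((hvd w hw).const_mul ε), pd_const_mul (hvd w hw) ε]
  -- second-order expansions at z
  have h2 : ∀ (e e' : ℝ × ℝ),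
      DifferentiableAt ℝ (pd e' u) z → DifferentiableAt ℝ (pd e' (rotV u)) z →
      pd e (pd e' (fun w => u w + ε * rotV u w)) z =
        pd e (pd e' u) z + ε * pd e (pd e' (rotV u)) z := by
    intro e e' hdu hdv
    have heq : pd e' (fun w => u w + ε * rotV u w) =ᶠ[𝓝 z]
        fun w => pd e' u w + ε * pd e' (rotV u) w := eventually_of_mem hΩz (h1 e')
    rw [pd_congr heq, pd_add hdu (hdv.const_mul ε), pd_const_mul hdv ε]
  have hdux : DifferentiableAt ℝ (pd (1,0) u) z := diffOn_of_contDiffOn hΩ hux z hz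
  have hduy : DifferentiableAt ℝ (pd (0,1) u) z := diffOn_of_contDiffOn hΩ huy z hz
  have hdvx : DifferentiableAt ℝ (pd (1,0) (rotV u)) z := diffOn_of_contDiffOn hΩ hvx z hz
  have hdvy : DifferentiableAt ℝ (pd (0,1) (rotV u)) z := diffOn_of_contDiffOn hΩ hvy z hz
  have e1 := h1 (1,0) z hz
  have e2 := h1 (0,1) z hz
  have e3 := h2 (1,0) (1,0) hdux hdvx
  have e4 := h2 (0,1) (1,0) hdux hdvx
  have e5 := h2 (0,1) (0,1) hduy hdvy
  show (1 + (pd (0,1) (fun w => u w + ε * rotV u w) z) ^ 2)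
        * pd (1,0) (pd (1,0) (fun w => u w + ε * rotV u w)) z
      - 2 * pd (1,0) (fun w => u w + ε * rotV u w) z
        * pd (0,1) (fun w => u w + ε * rotV u w) z
        * pd (0,1) (pd (1,0) (fun w => u w + ε * rotV u w)) z
      + (1 + (pd (1,0) (fun w => u w + ε * rotV u w) z) ^ 2)
        * pd (0,1) (pd (0,1) (fun w => u w + ε * rotV u w)) z = _
  rw [e1, e2, e3, e4, e5]

end Main6

/-- The rotation `φ₃¹² = y·u_x − x·u_y` is an infinitesimal symmetry of the
two-dimensional minimal surface equation at every `C³` solution `u`. -/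
theorem rotation_is_infinitesimal_symmetry
    (Ω : Set (ℝ × ℝ)) (hΩ : IsOpen Ω) (u : ℝ × ℝ → ℝ)
    (hu : ContDiffOn ℝ 3 u Ω) (hsol : ∀ z ∈ Ω, msOp u z = 0) :
    ∀ z ∈ Ω, HasDerivAt
      (fun ε : ℝ => msOp (fun w => u w + ε * (w.2 * px u w - w.1 * py u w)) z) 0 0 := by
  intro z hz
  have hfun : (fun ε : ℝ => msOp (fun w => u w + ε * (w.2 * px u w - w.1 * py u w)) z)
      = fun ε : ℝ =>
        (1 + (pd (0,1) u z + ε * pd (0,1) (rotV u) z) ^ 2)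
            * (pd (1,0) (pd (1,0) u) z + ε * pd (1,0) (pd (1,0) (rotV u)) z)
          - 2 * (pd (1,0) u z + ε * pd (1,0) (rotV u) z)
            * (pd (0,1) u z + ε * pd (0,1) (rotV u) z)
            * (pd (0,1) (pd (1,0) u) z + ε * pd (0,1) (pd (1,0) (rotV u)) z)
          + (1 + (pd (1,0) u z + ε * pd (1,0) (rotV u) z) ^ 2)
            * (pd (0,1) (pd (0,1) u) z + ε * pd (0,1) (pd (0,1) (rotV u)) z) := by
    funext ε
    exact msOp_expand hΩ hu hz ε
  rw [hfun]
  have H := hasDerivAt_msPoly (pd (1,0) u z) (pd (0,1) u z) (pd (1,0) (pd (1,0) u) z)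
      (pd (0,1) (pd (1,0) u) z) (pd (0,1) (pd (0,1) u) z)
      (pd (1,0) (rotV u) z) (pd (0,1) (rotV u) z)
      (pd (1,0) (pd (1,0) (rotV u)) z) (pd (0,1) (pd (1,0) (rotV u)) z)
      (pd (0,1) (pd (0,1) (rotV u)) z)
  have hD : 2 * pd (0,1) u z * pd (0,1) (rotV u) z * pd (1,0) (pd (1,0) u) z
      + (1 + (pd (0,1) u z) ^ 2) * pd (1,0) (pd (1,0) (rotV u)) z
      - 2 * (pd (1,0) (rotV u) z * pd (0,1) u z + pd (1,0) u z * pd (0,1) (rotV u) z)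
        * pd (0,1) (pd (1,0) u) z
      - 2 * pd (1,0) u z * pd (0,1) u z * pd (0,1) (pd (1,0) (rotV u)) z
      + 2 * pd (1,0) u z * pd (1,0) (rotV u) z * pd (0,1) (pd (0,1) u) z
      + (1 + (pd (1,0) u z) ^ 2) * pd (0,1) (pd (0,1) (rotV u)) z = 0 := by
    obtain ⟨hVxx, hVxy, hVyy⟩ := pdpd_rotV hΩ hu hz
    have hA := pd_rotV_x hΩ hu z hz
    have hB := pd_rotV_y hΩ hu z hz
    have hEx := pde_x hΩ hu hsol hz
    have hEy := pde_y hΩ hu hsol hz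
    rw [hA, hB, hVxx, hVxy, hVyy]
    linear_combination z.2 * hEx - z.1 * hEy
  rw [hD] at H
  exact H
end

section
/- Let φ : ℝ² → ℝ be a C² function such that for every open set Ω ⊆ ℝ² and every real-analytic solution u : Ω → ℝ of the minimal surface equation E(u) = 0, the function v := φ(∂ₓu, ∂_yu) is an infinitesimal symmetry (i.e., for every point of Ω the map ε ↦ E(u + εv) has derivative 0 at ε = 0). Then φ satisfies (1 + p²)·∂²φ/∂p² + 2pq·∂²φ/∂p∂q + (1 + q²)·∂²φ/∂q² = 0 at every point (p,q) ∈ ℝ². -/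
open Real ContinuousLinearMap

/-! ### Basic helper lemmas about `px`, `py` -/

lemma px_eq {f : ℝ × ℝ → ℝ} {L : ℝ × ℝ →L[ℝ] ℝ} {z : ℝ × ℝ} (h : HasFDerivAt f L z) :
    px f z = L (1, 0) := by rw [px, h.fderiv]

lemma py_eq {f : ℝ × ℝ → ℝ} {L : ℝ × ℝ →L[ℝ] ℝ} {z : ℝ × ℝ} (h : HasFDerivAt f L z) :
    py f z = L (0, 1) := by rw [py, h.fderiv]

lemma px_congr {f g : ℝ × ℝ → ℝ} {z : ℝ × ℝ} (h : f =ᶠ[nhds z] g) : px f z = px g z := by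
  rw [px, px, h.fderiv_eq]

lemma py_congr {f g : ℝ × ℝ → ℝ} {z : ℝ × ℝ} (h : f =ᶠ[nhds z] g) : py f z = py g z := by
  rw [py, py, h.fderiv_eq]

lemma px_congr_on {f g : ℝ × ℝ → ℝ} {s : Set (ℝ × ℝ)} (hs : IsOpen s) (h : Set.EqOn f g s)
    {z : ℝ × ℝ} (hz : z ∈ s) : px f z = px g z :=
  px_congr (Filter.eventuallyEq_of_mem (hs.mem_nhds hz) h)

lemma py_congr_on {f g : ℝ × ℝ → ℝ} {s : Set (ℝ × ℝ)} (hs : IsOpen s) (h : Set.EqOn f g s)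
    {z : ℝ × ℝ} (hz : z ∈ s) : py f z = py g z :=
  py_congr (Filter.eventuallyEq_of_mem (hs.mem_nhds hz) h)

lemma msOp_congr {f g : ℝ × ℝ → ℝ} {s : Set (ℝ × ℝ)} (hs : IsOpen s) (h : Set.EqOn f g s)
    {z : ℝ × ℝ} (hz : z ∈ s) : msOp f z = msOp g z := by
  have h1 : Set.EqOn (px f) (px g) s := fun w hw => px_congr_on hs h hw
  have h2 : Set.EqOn (py f) (py g) s := fun w hw => py_congr_on hs h hw
  rw [msOp, msOp, h1 hz, h2 hz, px_congr_on hs h1 hz, py_congr_on hs h1 hz,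
    py_congr_on hs h2 hz]

lemma clm_smul_fst (L : ℝ × ℝ →L[ℝ] ℝ) (c : ℝ) : L (-c, 0) = -c * L (1, 0) := by
  have h : ((-c, (0 : ℝ)) : ℝ × ℝ) = (-c) • ((1 : ℝ), (0 : ℝ)) := by simp
  rw [h, map_smul, smul_eq_mul]

lemma clm_smul_snd (L : ℝ × ℝ →L[ℝ] ℝ) (c d : ℝ) : L (0, c + d) = (c + d) * L (0, 1) := by
  have h : (((0 : ℝ), c + d) : ℝ × ℝ) = (c + d) • ((0 : ℝ), (1 : ℝ)) := by simp
  rw [h, map_smul, smul_eq_mul]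

/-! ### One-variable derivative facts -/

lemma hasDerivAt_tan' {x : ℝ} (h : Real.cos x ≠ 0) :
    HasDerivAt Real.tan (1 + Real.tan x ^ 2) x := by
  have := Real.hasDerivAt_tan h
  rwa [show 1 / Real.cos x ^ 2 = 1 + Real.tan x ^ 2 by
    rw [Real.tan_eq_sin_div_cos, div_pow]; field_simp; exact (Real.cos_sq_add_sin_sq x).symm] at this

lemma hasDerivAt_logcos {x : ℝ} (h : Real.cos x ≠ 0) :
    HasDerivAt (fun y => Real.log (Real.cos y)) (-Real.tan x) x := by
  have := (Real.hasDerivAt_log h).comp x (Real.hasDerivAt_cos x)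
  simpa [Real.tan_eq_sin_div_cos, div_eq_mul_inv, mul_comm, Function.comp_def] using this

lemma hasDerivAt_sec2 {x : ℝ} (h : Real.cos x ≠ 0) :
    HasDerivAt (fun y => 1 + Real.tan y ^ 2) (2 * Real.tan x * (1 + Real.tan x ^ 2)) x := by
  simpa using ((hasDerivAt_tan' h).pow 2).const_add 1

/-! ### Planar derivative building blocks -/

lemma hx1 {w : ℝ × ℝ} (h : Real.cos w.1 ≠ 0) :
    HasFDerivAt (fun w : ℝ × ℝ => -Real.tan w.1)
      ((-(1 + Real.tan w.1 ^ 2)) • fst ℝ ℝ ℝ) w :=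
  ((hasDerivAt_tan' h).neg).comp_hasFDerivAt w hasFDerivAt_fst

lemma hy1 {w : ℝ × ℝ} (h : Real.cos w.2 ≠ 0) :
    HasFDerivAt (fun w : ℝ × ℝ => Real.tan w.2)
      ((1 + Real.tan w.2 ^ 2) • snd ℝ ℝ ℝ) w :=
  (hasDerivAt_tan' h).comp_hasFDerivAt w hasFDerivAt_snd

lemma hx2 {w : ℝ × ℝ} (h : Real.cos w.1 ≠ 0) :
    HasFDerivAt (fun w : ℝ × ℝ => -(1 + Real.tan w.1 ^ 2))
      ((-(2 * Real.tan w.1 * (1 + Real.tan w.1 ^ 2))) • fst ℝ ℝ ℝ) w :=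
  ((hasDerivAt_sec2 h).neg).comp_hasFDerivAt w hasFDerivAt_fst

lemma hy2 {w : ℝ × ℝ} (h : Real.cos w.2 ≠ 0) :
    HasFDerivAt (fun w : ℝ × ℝ => 1 + Real.tan w.2 ^ 2)
      ((2 * Real.tan w.2 * (1 + Real.tan w.2 ^ 2)) • snd ℝ ℝ ℝ) w :=
  (hasDerivAt_sec2 h).comp_hasFDerivAt w hasFDerivAt_snd

/-! ### The gradient map of the Scherk solution and its derivative -/

noncomputable def gmap (w : ℝ × ℝ) : ℝ × ℝ := (-Real.tan w.1, Real.tan w.2)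

noncomputable def Gmap (w : ℝ × ℝ) : ℝ × ℝ →L[ℝ] ℝ × ℝ :=
  ((-(1 + Real.tan w.1 ^ 2)) • fst ℝ ℝ ℝ).prod ((1 + Real.tan w.2 ^ 2) • snd ℝ ℝ ℝ)

lemma gmap_hasFDerivAt {w : ℝ × ℝ} (h1 : Real.cos w.1 ≠ 0) (h2 : Real.cos w.2 ≠ 0) :
    HasFDerivAt gmap (Gmap w) w := (hx1 h1).prodMk (hy1 h2)

lemma Gmap_apply10 (w : ℝ × ℝ) :
    Gmap w (1, 0) = (-(1 + Real.tan w.1 ^ 2), 0) := by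
  simp [Gmap]

lemma Gmap_apply01 (w : ℝ × ℝ) :
    Gmap w (0, 1) = (0, 1 + Real.tan w.2 ^ 2) := by
  simp [Gmap]

/-! ### The Scherk solution -/

noncomputable def scherk (w : ℝ × ℝ) : ℝ := Real.log (Real.cos w.1) - Real.log (Real.cos w.2)

def box : Set (ℝ × ℝ) :=
  Set.Ioo (-(Real.pi / 2)) (Real.pi / 2) ×ˢ Set.Ioo (-(Real.pi / 2)) (Real.pi / 2)

lemma box_open : IsOpen box := (isOpen_Ioo).prod isOpen_Ioo

lemma box_cos_pos {w : ℝ × ℝ} (hw : w ∈ box) : 0 < Real.cos w.1 ∧ 0 < Real.cos w.2 :=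
  ⟨Real.cos_pos_of_mem_Ioo hw.1, Real.cos_pos_of_mem_Ioo hw.2⟩

lemma box_cos_ne {w : ℝ × ℝ} (hw : w ∈ box) : Real.cos w.1 ≠ 0 ∧ Real.cos w.2 ≠ 0 :=
  ⟨ne_of_gt (box_cos_pos hw).1, ne_of_gt (box_cos_pos hw).2⟩

lemma scherk_hasFDerivAt {w : ℝ × ℝ} (h1 : Real.cos w.1 ≠ 0) (h2 : Real.cos w.2 ≠ 0) :
    HasFDerivAt scherk
      ((-Real.tan w.1) • fst ℝ ℝ ℝ - (-Real.tan w.2) • snd ℝ ℝ ℝ) w := by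
  have ha : HasFDerivAt (fun w : ℝ × ℝ => Real.log (Real.cos w.1))
      ((-Real.tan w.1) • fst ℝ ℝ ℝ) w :=
    (hasDerivAt_logcos h1).comp_hasFDerivAt w hasFDerivAt_fst
  have hb : HasFDerivAt (fun w : ℝ × ℝ => Real.log (Real.cos w.2))
      ((-Real.tan w.2) • snd ℝ ℝ ℝ) w :=
    (hasDerivAt_logcos h2).comp_hasFDerivAt w hasFDerivAt_snd
  exact ha.sub hb

lemma px_scherk {w : ℝ × ℝ} (hw : w ∈ box) : px scherk w = -Real.tan w.1 := by
  obtain ⟨h1, h2⟩ := box_cos_ne hw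
  rw [px_eq (scherk_hasFDerivAt h1 h2)]
  simp

lemma py_scherk {w : ℝ × ℝ} (hw : w ∈ box) : py scherk w = Real.tan w.2 := by
  obtain ⟨h1, h2⟩ := box_cos_ne hw
  rw [py_eq (scherk_hasFDerivAt h1 h2)]
  simp

lemma pxx_scherk {w : ℝ × ℝ} (hw : w ∈ box) :
    px (px scherk) w = -(1 + Real.tan w.1 ^ 2) := by
  have h : Set.EqOn (px scherk) (fun w : ℝ × ℝ => -Real.tan w.1) box :=
    fun v hv => px_scherk hv
  rw [px_congr_on box_open h hw, px_eq (hx1 (box_cos_ne hw).1)]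
  simp

lemma pyx_scherk {w : ℝ × ℝ} (hw : w ∈ box) : py (px scherk) w = 0 := by
  have h : Set.EqOn (px scherk) (fun w : ℝ × ℝ => -Real.tan w.1) box :=
    fun v hv => px_scherk hv
  rw [py_congr_on box_open h hw, py_eq (hx1 (box_cos_ne hw).1)]
  simp

lemma pyy_scherk {w : ℝ × ℝ} (hw : w ∈ box) :
    py (py scherk) w = 1 + Real.tan w.2 ^ 2 := by
  have h : Set.EqOn (py scherk) (fun w : ℝ × ℝ => Real.tan w.2) box :=
    fun v hv => py_scherk hv
  rw [py_congr_on box_open h hw, py_eq (hy1 (box_cos_ne hw).2)]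
  simp

lemma msOp_scherk {w : ℝ × ℝ} (hw : w ∈ box) : msOp scherk w = 0 := by
  rw [msOp, px_scherk hw, py_scherk hw, pxx_scherk hw, pyx_scherk hw, pyy_scherk hw]
  ring

/-! ### Analyticity of the Scherk solution -/

open Complex in
lemma analyticAt_rlog {x : ℝ} (hx : 0 < x) : AnalyticAt ℝ Real.log x := by
  have h1 : AnalyticAt ℝ (fun y : ℝ => (Complex.log (Complex.ofRealCLM y)).re) x := by
    have hlog : AnalyticAt ℝ Complex.log (Complex.ofRealCLM x) := by
      refine (analyticAt_clog ?_).restrictScalars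
      simp only [Complex.ofRealCLM_apply]
      exact Complex.ofReal_mem_slitPlane.2 hx
    exact (Complex.reCLM.analyticAt _).comp (hlog.comp (Complex.ofRealCLM.analyticAt x))
  have he : (fun y : ℝ => (Complex.log (Complex.ofRealCLM y)).re) = Real.log := by
    funext y
    simp [Complex.log_re, Real.log_abs]
  rwa [he] at h1

lemma analyticAt_rcos (x : ℝ) : AnalyticAt ℝ Real.cos x := by
  have hc : AnalyticAt ℂ Complex.cos (Complex.ofRealCLM x) :=
    Complex.differentiable_cos.analyticAt _
  have h1 : AnalyticAt ℝ (fun y : ℝ => (Complex.cos (Complex.ofRealCLM y)).re) x :=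
    (Complex.reCLM.analyticAt _).comp (hc.restrictScalars.comp (Complex.ofRealCLM.analyticAt x))
  have he : (fun y : ℝ => (Complex.cos (Complex.ofRealCLM y)).re) = Real.cos := by
    funext y; simp [Complex.cos_ofReal_re]
  rwa [he] at h1

lemma scherk_analytic : AnalyticOnNhd ℝ scherk box := by
  intro w hw
  obtain ⟨h1, h2⟩ := box_cos_pos hw
  have ha : AnalyticAt ℝ (fun w : ℝ × ℝ => Real.log (Real.cos w.1)) w :=
    ((analyticAt_rlog h1).comp (analyticAt_rcos w.1)).comp analyticAt_fst
  have hb : AnalyticAt ℝ (fun w : ℝ × ℝ => Real.log (Real.cos w.2)) w :=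
    ((analyticAt_rlog h2).comp (analyticAt_rcos w.2)).comp analyticAt_snd
  exact ha.sub hb

/-! ### Polynomial derivative helper -/

lemma hasDerivAt_affine (a b : ℝ) : HasDerivAt (fun ε : ℝ => a + ε * b) b 0 := by
  simpa using ((hasDerivAt_id (0 : ℝ)).mul_const b).const_add a

set_option maxHeartbeats 1000000 in
/-- Conversely, if a `C²` function `φ(p,q)` generates an infinitesimal symmetry
`v = φ(u_x, u_y)` at every real-analytic solution `u` of the two-dimensional
minimal surface equation, then `φ` satisfies the determining equation
`(1 + p²)·φ_pp + 2pq·φ_pq + (1 + q²)·φ_qq = 0` everywhere. -/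
theorem contact_symmetry_satisfies_determining_equation
    (φ : ℝ × ℝ → ℝ) (hφ : ContDiff ℝ 2 φ)
    (hsym : ∀ (Ω : Set (ℝ × ℝ)), IsOpen Ω → ∀ u : ℝ × ℝ → ℝ, AnalyticOnNhd ℝ u Ω →
      (∀ z ∈ Ω, msOp u z = 0) →
      ∀ z ∈ Ω, HasDerivAt
        (fun ε : ℝ => msOp (fun w => u w + ε * φ (px u w, py u w)) z) 0 0) :
    ∀ z : ℝ × ℝ, (1 + z.1 ^ 2) * px (px φ) z + 2 * z.1 * z.2 * py (px φ) z
      + (1 + z.2 ^ 2) * py (py φ) z = 0 := by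
  -- regularity facts about φ
  have hφd : Differentiable ℝ φ := hφ.differentiable (by norm_num)
  have hpxφc : ContDiff ℝ 1 (px φ) := by
    have h := hφ.fderiv_right (m := 1) (by norm_num)
    exact h.clm_apply contDiff_const
  have hpyφc : ContDiff ℝ 1 (py φ) := by
    have h := hφ.fderiv_right (m := 1) (by norm_num)
    exact h.clm_apply contDiff_const
  have hpxφd : Differentiable ℝ (px φ) := hpxφc.differentiable one_ne_zero
  have hpyφd : Differentiable ℝ (py φ) := hpyφc.differentiable one_ne_zero
  rintro ⟨p, q⟩
  simp only
  -- the base point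
  set z0 : ℝ × ℝ := (Real.arctan (-p), Real.arctan q) with hz0def
  have hz0 : z0 ∈ box := by
    rw [hz0def]
    exact Set.mem_prod.2 ⟨Real.arctan_mem_Ioo _, Real.arctan_mem_Ioo _⟩
  have ht1 : Real.tan z0.1 = -p := by rw [hz0def]; exact Real.tan_arctan _
  have ht2 : Real.tan z0.2 = q := by rw [hz0def]; exact Real.tan_arctan _
  obtain ⟨hcz1, hcz2⟩ := box_cos_ne hz0
  have hgz0 : gmap z0 = (p, q) := by
    rw [gmap, ht1, ht2, neg_neg]
  -- the symmetry hypothesis applied to the Scherk solution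
  have hs := hsym box box_open scherk scherk_analytic (fun w hw => msOp_scherk hw) z0 hz0
  -- the key explicit computation of the perturbed operator
  have key : ∀ ε : ℝ, msOp (fun w => scherk w + ε * φ (px scherk w, py scherk w)) z0
      = (1 + (q + ε * ((1 + q ^ 2) * py φ (p, q))) ^ 2) * (-(1 + p ^ 2) + ε * ((1 + p ^ 2) ^ 2 * px (px φ) (p, q) + 2 * p * (1 + p ^ 2) * px φ (p, q))) - 2 * ((p + ε * (-(1 + p ^ 2) * px φ (p, q))) * (q + ε * ((1 + q ^ 2) * py φ (p, q))) * (ε * (-((1 + p ^ 2) * (1 + q ^ 2) * py (px φ) (p, q))))) + (1 + (p + ε * (-(1 + p ^ 2) * px φ (p, q))) ^ 2) * (1 + q ^ 2 + ε * ((1 + q ^ 2) ^ 2 * py (py φ) (p, q) + 2 * q * (1 + q ^ 2) * py φ (p, q))) := by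
    intro ε
    -- replace the perturbation by its explicit form
    have e0 : Set.EqOn (fun w => scherk w + ε * φ (px scherk w, py scherk w))
        (fun w => scherk w + ε * φ (gmap w)) box := by
      intro w hw
      simp only
      rw [px_scherk hw, py_scherk hw, gmap]
    rw [msOp_congr box_open e0 hz0]
    -- first derivative of the perturbed function on the box
    have hW : ∀ w ∈ box, HasFDerivAt (fun w => scherk w + ε * φ (gmap w))
        (((-Real.tan w.1) • fst ℝ ℝ ℝ - (-Real.tan w.2) • snd ℝ ℝ ℝ)
          + ε • ((fderiv ℝ φ (gmap w)).comp (Gmap w))) w := by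
      intro w hw
      obtain ⟨h1, h2⟩ := box_cos_ne hw
      exact (scherk_hasFDerivAt h1 h2).add
        (((hφd (gmap w)).hasFDerivAt.comp w (gmap_hasFDerivAt h1 h2)).const_mul ε)
    -- explicit first partials on the box
    have hpxW : Set.EqOn (px (fun w => scherk w + ε * φ (gmap w)))
        (fun w => -Real.tan w.1 + ε * (-(1 + Real.tan w.1 ^ 2) * px φ (gmap w))) box := by
      intro w hw
      rw [px_eq (hW w hw)]
      simp only [add_apply, ContinuousLinearMap.sub_apply, smul_apply,
        coe_fst', coe_snd', Prod.fst, Prod.snd, comp_apply, Gmap_apply10, clm_smul_fst, smul_eq_mul, px]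
      ring
    have hpyW : Set.EqOn (py (fun w => scherk w + ε * φ (gmap w)))
        (fun w => Real.tan w.2 + ε * ((1 + Real.tan w.2 ^ 2) * py φ (gmap w))) box := by
      intro w hw
      rw [py_eq (hW w hw)]
      simp only [add_apply, ContinuousLinearMap.sub_apply, smul_apply,
        coe_fst', coe_snd', Prod.fst, Prod.snd, comp_apply, Gmap_apply01, clm_smul_snd, smul_eq_mul, py]
      ring
    -- second derivatives of the perturbed function at z0
    have hPX : HasFDerivAt
        (fun w => -Real.tan w.1 + ε * (-(1 + Real.tan w.1 ^ 2) * px φ (gmap w)))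
        (((-(1 + Real.tan z0.1 ^ 2)) • fst ℝ ℝ ℝ)
          + ε • ((-(1 + Real.tan z0.1 ^ 2)) • ((fderiv ℝ (px φ) (gmap z0)).comp (Gmap z0))
            + (px φ (gmap z0)) • ((-(2 * Real.tan z0.1 * (1 + Real.tan z0.1 ^ 2))) • fst ℝ ℝ ℝ))) z0 := by
      have hcomp : HasFDerivAt (fun w => px φ (gmap w))
          ((fderiv ℝ (px φ) (gmap z0)).comp (Gmap z0)) z0 :=
        (hpxφd (gmap z0)).hasFDerivAt.comp z0 (gmap_hasFDerivAt hcz1 hcz2)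
      exact (hx1 hcz1).add (((hx2 hcz1).mul hcomp).const_mul ε)
    have hPY : HasFDerivAt
        (fun w => Real.tan w.2 + ε * ((1 + Real.tan w.2 ^ 2) * py φ (gmap w)))
        (((1 + Real.tan z0.2 ^ 2) • snd ℝ ℝ ℝ)
          + ε • ((1 + Real.tan z0.2 ^ 2) • ((fderiv ℝ (py φ) (gmap z0)).comp (Gmap z0))
            + (py φ (gmap z0)) • ((2 * Real.tan z0.2 * (1 + Real.tan z0.2 ^ 2)) • snd ℝ ℝ ℝ))) z0 := by
      have hcomp : HasFDerivAt (fun w => py φ (gmap w))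
          ((fderiv ℝ (py φ) (gmap z0)).comp (Gmap z0)) z0 :=
        (hpyφd (gmap z0)).hasFDerivAt.comp z0 (gmap_hasFDerivAt hcz1 hcz2)
      exact (hy1 hcz2).add (((hy2 hcz2).mul hcomp).const_mul ε)
    -- now evaluate all the pieces at z0
    have hx0 : px (fun w => scherk w + ε * φ (gmap w)) z0
        = -Real.tan z0.1 + ε * (-(1 + Real.tan z0.1 ^ 2) * px φ (gmap z0)) := hpxW hz0
    have hy0 : py (fun w => scherk w + ε * φ (gmap w)) z0
        = Real.tan z0.2 + ε * ((1 + Real.tan z0.2 ^ 2) * py φ (gmap z0)) := hpyW hz0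
    have hxx : px (px (fun w => scherk w + ε * φ (gmap w))) z0
        = -(1 + Real.tan z0.1 ^ 2)
          + ε * (-(1 + Real.tan z0.1 ^ 2) * (-(1 + Real.tan z0.1 ^ 2) * px (px φ) (gmap z0))
            + px φ (gmap z0) * (-(2 * Real.tan z0.1 * (1 + Real.tan z0.1 ^ 2)))) := by
      rw [px_congr_on box_open hpxW hz0, px_eq hPX]
      simp only [add_apply, smul_apply, coe_fst', coe_snd', Prod.fst, Prod.snd, comp_apply,
        Gmap_apply10, clm_smul_fst, smul_eq_mul, px]
      ring
    have hyx : py (px (fun w => scherk w + ε * φ (gmap w))) z0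
        = ε * (-(1 + Real.tan z0.1 ^ 2) * ((1 + Real.tan z0.2 ^ 2) * py (px φ) (gmap z0))) := by
      rw [py_congr_on box_open hpxW hz0, py_eq hPX]
      simp only [add_apply, smul_apply, coe_fst', coe_snd', Prod.fst, Prod.snd, comp_apply,
        Gmap_apply01, clm_smul_snd, smul_eq_mul, px, py]
      ring
    have hyy : py (py (fun w => scherk w + ε * φ (gmap w))) z0
        = (1 + Real.tan z0.2 ^ 2)
          + ε * ((1 + Real.tan z0.2 ^ 2) * ((1 + Real.tan z0.2 ^ 2) * py (py φ) (gmap z0))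
            + py φ (gmap z0) * (2 * Real.tan z0.2 * (1 + Real.tan z0.2 ^ 2))) := by
      rw [py_congr_on box_open hpyW hz0, py_eq hPY]
      simp only [add_apply, smul_apply, coe_fst', coe_snd', Prod.fst, Prod.snd, comp_apply,
        Gmap_apply01, clm_smul_snd, smul_eq_mul, py]
      ring
    rw [msOp, hx0, hy0, hxx, hyx, hyy, hgz0, ht1, ht2]
    ring
  -- turn the symmetry statement into a statement about the explicit polynomial
  rw [funext key] at hs
  -- compute the derivative of the explicit polynomial at 0
  have Hraw := ((((hasDerivAt_affine q ((1 + q ^ 2) * py φ (p, q))).pow 2).const_add 1).mul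
      (hasDerivAt_affine (-(1 + p ^ 2)) ((1 + p ^ 2) ^ 2 * px (px φ) (p, q) + 2 * p * (1 + p ^ 2) * px φ (p, q)))).sub
    ((((hasDerivAt_affine p (-(1 + p ^ 2) * px φ (p, q))).mul (hasDerivAt_affine q ((1 + q ^ 2) * py φ (p, q)))).mul
      ((hasDerivAt_id (0 : ℝ)).mul_const (-((1 + p ^ 2) * (1 + q ^ 2) * py (px φ) (p, q))))).const_mul 2) |>.add
    ((((hasDerivAt_affine p (-(1 + p ^ 2) * px φ (p, q))).pow 2).const_add 1).mul
      (hasDerivAt_affine (1 + q ^ 2) ((1 + q ^ 2) ^ 2 * py (py φ) (p, q) + 2 * q * (1 + q ^ 2) * py φ (p, q))))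
  have hD := Hraw.unique hs
  -- derive the determining equation
  have hne : ((1 : ℝ) + p ^ 2) * (1 + q ^ 2) ≠ 0 := by positivity
  have h2 : ((1 : ℝ) + p ^ 2) * (1 + q ^ 2)
      * ((1 + p ^ 2) * px (px φ) (p, q) + 2 * p * q * py (px φ) (p, q)
        + (1 + q ^ 2) * py (py φ) (p, q)) = 0 := by
    norm_num at hD
    linear_combination hD
  exact (mul_eq_zero.mp h2).resolve_left hne
end

section
/- Let Ω ⊆ ℝ² be open and connected, let u : Ω → ℝ be a C² solution of the two-dimensional minimal surface equation (1 + u_y²)uₓₓ − 2uₓu_y·uₓᵧ + (1 + uₓ²)u_yy = 0 on Ω, and suppose there is a C¹ function φ : ℝ → ℝ such that ∂_yu = φ(∂ₓu) on Ω (i.e., the minimal surface is invariant under a contact symmetry depending only on first derivatives). Then all second-order partial derivatives of u vanish identically on Ω, so ∇u is constant and the graph of u is (part of) a plane. -/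
/-- A function with vanishing derivative on an open preconnected set is constant there. -/
lemma const_of_fderiv_zero_on {f : ℝ × ℝ → ℝ} {Ω : Set (ℝ × ℝ)} (hΩ : IsOpen Ω)
    (hc : IsPreconnected Ω) (hdf : ∀ z ∈ Ω, DifferentiableAt ℝ f z)
    (h0 : ∀ z ∈ Ω, fderiv ℝ f z = 0) {x y : ℝ × ℝ} (hx : x ∈ Ω) (hy : y ∈ Ω) :
    f x = f y := by
  haveI : PreconnectedSpace Ω := Subtype.preconnectedSpace hc
  have hlc : IsLocallyConstant (fun p : Ω => f p) := by
    rw [IsLocallyConstant.iff_exists_open]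
    rintro ⟨z, hz⟩
    obtain ⟨ε, hε, hball⟩ := Metric.isOpen_iff.1 hΩ z hz
    refine ⟨Subtype.val ⁻¹' Metric.ball z ε,
      Metric.isOpen_ball.preimage continuous_subtype_val, by simpa using hε, ?_⟩
    rintro ⟨w, hw⟩ hwball
    have hwb : w ∈ Metric.ball z ε := hwball
    refine (convex_ball z ε).is_const_of_fderivWithin_eq_zero
      (fun p hp => (hdf p (hball hp)).differentiableWithinAt) (fun p hp => ?_) hwb
      (Metric.mem_ball_self hε)
    rw [fderivWithin_of_isOpen Metric.isOpen_ball hp]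
    exact h0 p (hball hp)
  exact hlc.apply_eq_of_preconnectedSpace ⟨x, hx⟩ ⟨y, hy⟩

/-- A minimal surface invariant with respect to a contact symmetry depending only
on first derivatives (`u_y = φ(u_x)` on `Ω`) is a plane: all second-order partial
derivatives of `u` vanish on `Ω` and the gradient of `u` is constant. -/
theorem contact_invariant_minimal_surface_is_plane
    (Ω : Set (ℝ × ℝ)) (hΩ : IsOpen Ω) (hconn : IsConnected Ω)
    (u : ℝ × ℝ → ℝ) (hu : ContDiffOn ℝ 2 u Ω)
    (hsol : ∀ z ∈ Ω, msOp u z = 0)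
    (φ : ℝ → ℝ) (hφ : ContDiff ℝ 1 φ)
    (hinv : ∀ z ∈ Ω, py u z = φ (px u z)) :
    (∀ z ∈ Ω, px (px u) z = 0 ∧ py (px u) z = 0 ∧ px (py u) z = 0 ∧ py (py u) z = 0)
      ∧ ∃ g : ℝ × ℝ, ∀ z ∈ Ω, px u z = g.1 ∧ py u z = g.2 := by
  -- first derivatives are C¹ on Ω
  have hfd : ContDiffOn ℝ 1 (fderiv ℝ u) Ω := hu.fderiv_of_isOpen hΩ (by norm_num)
  have hpx : ContDiffOn ℝ 1 (px u) Ω := hfd.clm_apply contDiffOn_const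
  have hpy : ContDiffOn ℝ 1 (py u) Ω := hfd.clm_apply contDiffOn_const
  have hpxd : ∀ z ∈ Ω, DifferentiableAt ℝ (px u) z := fun z hz =>
    (hpx.contDiffAt (hΩ.mem_nhds hz)).differentiableAt one_ne_zero
  have hpyd : ∀ z ∈ Ω, DifferentiableAt ℝ (py u) z := fun z hz =>
    (hpy.contDiffAt (hΩ.mem_nhds hz)).differentiableAt one_ne_zero
  -- second derivatives via fderiv of fderiv
  have key : ∀ z ∈ Ω, px (px u) z = 0 ∧ py (px u) z = 0 ∧ px (py u) z = 0 ∧ py (py u) z = 0 := by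
    intro z hz
    have hu2 : ContDiffAt ℝ 2 u z := hu.contDiffAt (hΩ.mem_nhds hz)
    have hfdd : DifferentiableAt ℝ (fderiv ℝ u) z :=
      (hu2.fderiv_right (m := 1) le_rfl).differentiableAt one_ne_zero
    set H := fderiv ℝ (fderiv ℝ u) z with hH
    -- fderiv of the partial-application maps
    have happ : ∀ v : ℝ × ℝ, HasFDerivAt (fun w => fderiv ℝ u w v)
        ((ContinuousLinearMap.apply ℝ ℝ v).comp H) z :=
      fun v => (ContinuousLinearMap.apply ℝ ℝ v).hasFDerivAt.comp z hfdd.hasFDerivAt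
    have hfx' : fderiv ℝ (px u) z = (ContinuousLinearMap.apply ℝ ℝ ((1:ℝ), (0:ℝ))).comp H :=
      (happ (1, 0)).fderiv
    have hfy' : fderiv ℝ (py u) z = (ContinuousLinearMap.apply ℝ ℝ ((0:ℝ), (1:ℝ))).comp H :=
      (happ (0, 1)).fderiv
    have hfx : ∀ v : ℝ × ℝ, fderiv ℝ (px u) z v = H v (1, 0) := fun v => by rw [hfx']; rfl
    have hfy : ∀ v : ℝ × ℝ, fderiv ℝ (py u) z v = H v (0, 1) := fun v => by rw [hfy']; rfl
    -- symmetry of second derivatives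
    have hsymm : IsSymmSndFDerivAt ℝ u z := hu2.isSymmSndFDerivAt (by simp [minSmoothness_of_isRCLikeNormedField])
    -- chain rule for the contact symmetry
    set a := px u z with ha
    set c := deriv φ a with hc
    have hchain : ∀ v : ℝ × ℝ, fderiv ℝ (py u) z v = c * fderiv ℝ (px u) z v := by
      intro v
      have heq : py u =ᶠ[nhds z] fun w => φ (px u w) :=
        Filter.eventuallyEq_of_mem (hΩ.mem_nhds hz) hinv
      have hcomp : HasFDerivAt (fun w => φ (px u w)) (c • fderiv ℝ (px u) z) z :=
        (hφ.differentiable one_ne_zero a).hasDerivAt.comp_hasFDerivAt z (hpxd z hz).hasFDerivAt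
      rw [heq.fderiv_eq, hcomp.fderiv]
      simp
    -- name second-order quantities
    have hP : px (px u) z = H (1, 0) (1, 0) := hfx (1, 0)
    have hQ : py (px u) z = H (0, 1) (1, 0) := hfx (0, 1)
    have hQ' : px (py u) z = H (1, 0) (0, 1) := hfy (1, 0)
    have hR : py (py u) z = H (0, 1) (0, 1) := hfy (0, 1)
    have hsQ : py (px u) z = px (py u) z := by rw [hQ, hQ', hsymm.eq]
    have h1 : px (py u) z = c * px (px u) z := hchain (1, 0)
    have h2 : py (py u) z = c * py (px u) z := hchain (0, 1)
    have hms := hsol z hz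
    unfold msOp at hms
    have hb : py u z = φ a := hinv z hz
    set P := px (px u) z
    set b := py u z
    -- substitute the relations into the minimal surface equation
    have hQP : py (px u) z = c * P := by rw [hsQ, h1]
    have hRP : py (py u) z = c * (c * P) := by rw [h2, hQP]
    rw [hQP, hRP] at hms
    have hfac : P * (1 + c ^ 2 + (b - a * c) ^ 2) = 0 := by ring_nf; ring_nf at hms; linarith
    have hpos : (0:ℝ) < 1 + c ^ 2 + (b - a * c) ^ 2 := by positivity
    have hP0 : P = 0 := by
      rcases mul_eq_zero.1 hfac with h | h
      · exact h
      · exact absurd h (ne_of_gt hpos)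
    refine ⟨hP0, ?_, ?_, ?_⟩
    · rw [hQP, hP0, mul_zero]
    · rw [← hsQ, hQP, hP0, mul_zero]
    · rw [hRP, hP0, mul_zero, mul_zero]
  refine ⟨key, ?_⟩
  obtain ⟨z₀, hz₀⟩ := hconn.nonempty
  refine ⟨(px u z₀, py u z₀), fun z hz => ?_⟩
  have hzero : ∀ f : ℝ × ℝ → ℝ, (∀ w ∈ Ω, px f w = 0 ∧ py f w = 0) →
      (∀ w ∈ Ω, DifferentiableAt ℝ f w) → f z = f z₀ := by
    intro f hf hdf
    refine const_of_fderiv_zero_on hΩ hconn.isPreconnected hdf (fun w hw => ?_) hz hz₀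
    refine ContinuousLinearMap.ext fun v => ?_
    obtain ⟨h1, h2⟩ := hf w hw
    have hv : v = v.1 • ((1:ℝ), (0:ℝ)) + v.2 • ((0:ℝ), (1:ℝ)) := by
      simp [Prod.ext_iff]
    simp only [px] at h1
    simp only [py] at h2
    rw [hv, map_add, map_smul, map_smul, h1, h2]
    simp
  constructor
  · exact hzero (px u) (fun w hw => ⟨(key w hw).1, (key w hw).2.1⟩) hpxd
  · exact hzero (py u) (fun w hw => ⟨(key w hw).2.2.1, (key w hw).2.2.2⟩) hpyd
end

section
/- Let k ≥ 1 be an integer and let f : ℝ → ℂ be any C² function satisfying (1 + p²)·f″(p) + 4k·p·f′(p) + 2k(2k − 1)·f(p) = 0 for all p ∈ ℝ. Then there exist unique constants C₁, C₂ ∈ ℂ such that f(p) = C₁·(p + i)^{1−2k} + C₂·(p − i)^{1−2k} for all p ∈ ℝ; i.e., the solution space of this ODE is exactly the two-dimensional span of (p + i)^{1−2k} and (p − i)^{1−2k}. -/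
open Complex Set

section evenHeadAux

lemma evenHead_zpow_hasDerivAt (c : ℂ) (hc : ∀ p : ℝ, (p:ℂ) + c ≠ 0) (n : ℤ) (p : ℝ) :
    HasDerivAt (fun q : ℝ => ((q:ℂ) + c)^n) ((n:ℂ) * ((p:ℂ) + c)^(n-1)) p := by
  have h1 : HasDerivAt (fun z : ℂ => (z + c)^n) ((n:ℂ) * ((p:ℂ) + c)^(n-1) * 1) (p:ℂ) := by
    have := (hasDerivAt_zpow n ((p:ℂ) + c) (Or.inl (hc p))).comp (p:ℂ)
      ((hasDerivAt_id (p:ℂ)).add_const c)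
    simpa [Function.comp_def] using this
  simpa using h1.comp_ofReal

lemma evenHead_ode_zpow_identity (c : ℂ) (hc2 : c^2 = -1) (hc : ∀ p : ℝ, (p:ℂ) + c ≠ 0)
    (k : ℕ) (m : ℤ) (hm : (m:ℂ) = 1 - 2*(k:ℂ)) (p : ℝ) :
    ((1:ℂ) + (p:ℂ)^2) * ((m:ℂ) * ((m:ℂ) - 1) * ((p:ℂ)+c)^(m-2))
      + 4*(k:ℂ)*(p:ℂ) * ((m:ℂ) * ((p:ℂ)+c)^(m-1))
      + 2*(k:ℂ)*(2*(k:ℂ)-1) * ((p:ℂ)+c)^m = 0 := by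
  have h1 : ((p:ℂ)+c)^(m-1) = ((p:ℂ)+c)^(m-2) * ((p:ℂ)+c) := by
    rw [← zpow_add_one₀ (hc p)]; ring_nf
  have h2 : ((p:ℂ)+c)^m = ((p:ℂ)+c)^(m-2) * ((p:ℂ)+c)^2 := by
    rw [← zpow_natCast (((p:ℂ)+c)) 2, ← zpow_add₀ (hc p)]; ring_nf
  rw [h1, h2, hm]
  linear_combination (2*(k:ℂ)*(2*(k:ℂ)-1) * ((p:ℂ)+c)^(m-2)) * hc2

/-- The first-order system associated to the ODE. -/
noncomputable def evenHeadVF (k : ℕ) (t : ℝ) (z : ℂ × ℂ) : ℂ × ℂ :=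
  (z.2, -(1 + (t:ℂ)^2)⁻¹ * (4*(k:ℂ)*(t:ℂ)*z.2 + 2*(k:ℂ)*(2*(k:ℂ)-1)*z.1))

lemma evenHead_inv_norm (t : ℝ) : ‖(1 + (t:ℂ)^2)⁻¹‖ = (1 + t^2)⁻¹ := by
  have : (1 + (t:ℂ)^2) = ((1 + t^2 : ℝ) : ℂ) := by push_cast; ring
  rw [this, norm_inv, Complex.norm_real, Real.norm_eq_abs, abs_of_pos (by positivity)]

lemma evenHeadVF_lip (k : ℕ) (t : ℝ) :
    LipschitzWith (⟨1 + 2*k + 4*k^2, by positivity⟩ : NNReal) (evenHeadVF k t) := by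
  refine lipschitzWith_iff_dist_le_mul.mpr ?_
  intro z w
  have ht : (0:ℝ) < 1 + t^2 := by positivity
  set d1 := dist z.1 w.1 with hd1
  set d2 := dist z.2 w.2 with hd2
  have hM1 : d1 ≤ max d1 d2 := le_max_left _ _
  have hM2 : d2 ≤ max d1 d2 := le_max_right _ _
  have hMnn : 0 ≤ max d1 d2 := le_trans dist_nonneg hM1
  rw [Prod.dist_eq, Prod.dist_eq]; show max _ _ ≤ (1 + 2*(k:ℝ) + 4*(k:ℝ)^2) * max _ _
  apply max_le
  · calc dist (evenHeadVF k t z).1 (evenHeadVF k t w).1 = d2 := rfl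
      _ ≤ max d1 d2 := hM2
      _ ≤ (1 + 2*k + 4*k^2) * max d1 d2 := by nlinarith [hMnn]
  · have hA : ‖(1 + (t:ℂ)^2)⁻¹ * (4*(k:ℂ)*(t:ℂ))‖ ≤ 2*k := by
      rw [norm_mul, evenHead_inv_norm]
      have : ‖4*(k:ℂ)*(t:ℂ)‖ = 4*k*|t| := by
        rw [show 4*(k:ℂ)*(t:ℂ) = ((4*k*t : ℝ) : ℂ) by push_cast; ring, Complex.norm_real,
          Real.norm_eq_abs, _root_.abs_mul, _root_.abs_of_nonneg (by positivity : (0:ℝ) ≤ 4*(k:ℝ))]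
      rw [this]
      rw [inv_mul_le_iff₀ ht]
      nlinarith [sq_nonneg (|t| - 1), _root_.sq_abs t, Nat.cast_nonneg (α := ℝ) k]
    have hB : ‖(1 + (t:ℂ)^2)⁻¹ * (2*(k:ℂ)*(2*(k:ℂ)-1))‖ ≤ 4*k^2 := by
      rw [norm_mul, evenHead_inv_norm]
      have : ‖2*(k:ℂ)*(2*(k:ℂ)-1)‖ = |2*(k:ℝ)*(2*k-1)| := by
        rw [show 2*(k:ℂ)*(2*(k:ℂ)-1) = ((2*k*(2*(k:ℝ))-2*k : ℝ) : ℂ) by push_cast; ring,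
          Complex.norm_real, Real.norm_eq_abs]
        congr 1; ring
      rw [this, inv_mul_le_iff₀ ht]
      rcases Nat.eq_zero_or_pos k with hk | hk
      · simp [hk]
      · have hk1 : (1:ℝ) ≤ k := by exact_mod_cast hk
        rw [_root_.abs_of_nonneg (by nlinarith)]
        nlinarith [sq_nonneg t]
    calc dist (evenHeadVF k t z).2 (evenHeadVF k t w).2
        = ‖((1 + (t:ℂ)^2)⁻¹ * (4*(k:ℂ)*(t:ℂ))) * (w.2 - z.2)
            + ((1 + (t:ℂ)^2)⁻¹ * (2*(k:ℂ)*(2*(k:ℂ)-1))) * (w.1 - z.1)‖ := by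
          rw [dist_eq_norm]; congr 1; simp only [evenHeadVF]; ring
      _ ≤ ‖((1 + (t:ℂ)^2)⁻¹ * (4*(k:ℂ)*(t:ℂ))) * (w.2 - z.2)‖
            + ‖((1 + (t:ℂ)^2)⁻¹ * (2*(k:ℂ)*(2*(k:ℂ)-1))) * (w.1 - z.1)‖ := norm_add_le _ _
      _ = ‖(1 + (t:ℂ)^2)⁻¹ * (4*(k:ℂ)*(t:ℂ))‖ * d2
            + ‖(1 + (t:ℂ)^2)⁻¹ * (2*(k:ℂ)*(2*(k:ℂ)-1))‖ * d1 := by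
          rw [norm_mul ((1 + (t:ℂ)^2)⁻¹ * (4*(k:ℂ)*(t:ℂ))) (w.2 - z.2),
            norm_mul ((1 + (t:ℂ)^2)⁻¹ * (2*(k:ℂ)*(2*(k:ℂ)-1))) (w.1 - z.1),
            hd1, hd2, dist_eq_norm, dist_eq_norm,
            norm_sub_rev z.1 w.1, norm_sub_rev z.2 w.2]
      _ ≤ (2*k) * max d1 d2 + (4*k^2) * max d1 d2 := by gcongr
      _ ≤ (1 + 2*k + 4*k^2) * max d1 d2 := by nlinarith [hMnn]

/-- Uniqueness for the second order linear ODE, via the associated first order system. -/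
lemma evenHead_sol_unique (k : ℕ) (f g f' g' : ℝ → ℂ)
    (hfd : ∀ p : ℝ, HasDerivAt f (f' p) p)
    (hfd' : ∀ p : ℝ, HasDerivAt f'
      (-(1 + (p:ℂ)^2)⁻¹ * (4*(k:ℂ)*(p:ℂ)*(f' p) + 2*(k:ℂ)*(2*(k:ℂ)-1)*(f p))) p)
    (hgd : ∀ p : ℝ, HasDerivAt g (g' p) p)
    (hgd' : ∀ p : ℝ, HasDerivAt g'
      (-(1 + (p:ℂ)^2)⁻¹ * (4*(k:ℂ)*(p:ℂ)*(g' p) + 2*(k:ℂ)*(2*(k:ℂ)-1)*(g p))) p)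
    (h0 : f 0 = g 0) (h0' : f' 0 = g' 0) : ∀ p : ℝ, f p = g p := by
  intro p
  set F : ℝ → ℂ × ℂ := fun t => (f t, f' t) with hF
  set G : ℝ → ℂ × ℂ := fun t => (g t, g' t) with hG
  have hFder : ∀ t, HasDerivAt F (evenHeadVF k t (F t)) t := fun t => (hfd t).prodMk (hfd' t)
  have hGder : ∀ t, HasDerivAt G (evenHeadVF k t (G t)) t := fun t => (hgd t).prodMk (hgd' t)
  have key : F p = G p := by
    have hmem : (0:ℝ) ∈ Ioo (-(|p|+1)) (|p|+1) := by
      constructor <;> [nlinarith [abs_nonneg p]; nlinarith [abs_nonneg p]]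
    have := ODE_solution_unique_of_mem_Ioo
      (v := evenHeadVF k) (s := fun _ => univ) (K := ⟨1 + 2*k + 4*k^2, by positivity⟩)
      (fun t _ => (evenHeadVF_lip k t).lipschitzOnWith)
      hmem
      (f := F) (g := G)
      (fun t _ => ⟨hFder t, mem_univ _⟩) (fun t _ => ⟨hGder t, mem_univ _⟩)
      (by rw [hF, hG]; simp [h0, h0'])
    exact this ⟨by nlinarith [abs_nonneg p, neg_abs_le p], by nlinarith [le_abs_self p]⟩
  exact congrArg Prod.fst key

end evenHeadAux

lemma evenHead_init1 (ε A B M : ℂ) (hε2 : ε * ε = 1) (hM : M ≠ 0) :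
    ε * (M * A + I * B) / (2 * M * I) * (I * ε)
      + ε * (I * B - M * A) / (2 * M * I) * (-(I * ε)) = A := by
  field_simp
  linear_combination (2 * M * A) * hε2

lemma evenHead_init2 (ε A B M : ℂ) (hε2 : ε * ε = 1) (hM : M ≠ 0) :
    ε * (M * A + I * B) / (2 * M * I) * (M * ε)
      + ε * (I * B - M * A) / (2 * M * I) * (M * ε) = B := by
  field_simp
  linear_combination (2 * I * B) * hε2

/-- Every `C²` solution `f : ℝ → ℂ` of `(1 + p²)f″ + 4kp·f′ + 2k(2k−1)f = 0` is a
unique complex linear combination of `(p + i)^{1−2k}` and `(p − i)^{1−2k}`. -/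
theorem even_head_ode_general_solution (k : ℕ) (hk : 1 ≤ k)
    (f : ℝ → ℂ) (hf : ContDiff ℝ 2 f)
    (hode : ∀ p : ℝ,
      ((1 : ℂ) + (p : ℂ) ^ 2) * deriv (deriv f) p
        + 4 * (k : ℂ) * (p : ℂ) * deriv f p
        + 2 * (k : ℂ) * (2 * (k : ℂ) - 1) * f p = 0) :
    ∃! C : ℂ × ℂ, ∀ p : ℝ,
      f p = C.1 * ((p : ℂ) + I) ^ (1 - 2 * (k : ℤ))
        + C.2 * ((p : ℂ) - I) ^ (1 - 2 * (k : ℤ)) := by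
  obtain ⟨m, hmdef⟩ : ∃ m : ℤ, m = 1 - 2 * (k : ℤ) := ⟨_, rfl⟩
  rw [← hmdef]
  have hm : (m:ℂ) = 1 - 2*(k:ℂ) := by rw [hmdef]; push_cast; ring
  have hmz : m ≠ 0 := by omega
  have hmne : (m:ℂ) ≠ 0 := Int.cast_ne_zero.mpr hmz
  -- nonvanishing of the bases
  have hcI : ∀ p : ℝ, (p:ℂ) + I ≠ 0 := by
    intro p h
    have := congrArg Complex.im h
    simp at this
  have hcmI : ∀ p : ℝ, (p:ℂ) + (-I) ≠ 0 := by
    intro p h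
    have := congrArg Complex.im h
    simp at this
  -- the sign ε = (-1)^k
  obtain ⟨ε, hεdef⟩ : ∃ ε : ℂ, ε = (-1) ^ k := ⟨_, rfl⟩
  have hε2 : ε * ε = 1 := by
    rw [hεdef, ← pow_add, ← two_mul, pow_mul]
    norm_num
  have hε : ε = 1 ∨ ε = -1 := by
    rcases Nat.even_or_odd k with h | h
    · left; rw [hεdef, h.neg_one_pow]
    · right; rw [hεdef, h.neg_one_pow]
  have hεne : ε ≠ 0 := by rcases hε with h | h <;> simp [h]
  -- zpow evaluations at I and -I
  have hIpow : (I:ℂ) ^ (m - 1) = ε := by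
    have h1 : m - 1 = (2:ℤ) * (-(k:ℤ)) := by rw [hmdef]; ring
    rw [h1, zpow_mul, show (I:ℂ)^(2:ℤ) = -1 by
        rw [show (2:ℤ) = ((2:ℕ):ℤ) from rfl, zpow_natCast, I_sq],
      zpow_neg, zpow_natCast, hεdef, ← inv_pow, inv_neg, inv_one]
  have hmIpow : (-I:ℂ) ^ (m - 1) = ε := by
    have h1 : m - 1 = (2:ℤ) * (-(k:ℤ)) := by rw [hmdef]; ring
    rw [h1, zpow_mul, show (-I:ℂ)^(2:ℤ) = -1 by
        rw [show (2:ℤ) = ((2:ℕ):ℤ) from rfl, zpow_natCast, neg_pow, I_sq]; norm_num,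
      zpow_neg, zpow_natCast, hεdef, ← inv_pow, inv_neg, inv_one]
  have hIm : (I:ℂ) ^ m = I * ε := by
    rw [show m = (m - 1) + 1 by ring, zpow_add_one₀ I_ne_zero, hIpow]; ring
  have hmIm : (-I:ℂ) ^ m = -(I * ε) := by
    rw [show m = (m - 1) + 1 by ring, zpow_add_one₀ (by simpa using I_ne_zero : (-I:ℂ) ≠ 0),
      hmIpow]; ring
  -- analytic preliminaries for f
  have hdf : Differentiable ℝ f := hf.differentiable (by norm_num)
  have hf2 : ContDiff ℝ ((1:ℕ)+1) f := by exact_mod_cast hf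
  have hddf : Differentiable ℝ (deriv f) :=
    ((contDiff_succ_iff_deriv).mp hf2).2.2.differentiable (by norm_num)
  have hfd : ∀ p : ℝ, HasDerivAt f (deriv f p) p := fun p => (hdf p).hasDerivAt
  have hne : ∀ p : ℝ, (1 + (p:ℂ)^2) ≠ 0 := by
    intro p
    rw [show (1 + (p:ℂ)^2) = ((1 + p^2 : ℝ) : ℂ) by push_cast; ring]
    exact_mod_cast (by positivity : (1 + p^2 : ℝ) ≠ 0)
  have hfd' : ∀ p : ℝ, HasDerivAt (deriv f)
      (-(1 + (p:ℂ)^2)⁻¹ * (4*(k:ℂ)*(p:ℂ)*(deriv f p) + 2*(k:ℂ)*(2*(k:ℂ)-1)*(f p))) p := by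
    intro p
    convert (hddf p).hasDerivAt using 1
    case e'_4 => rfl
    have h := hode p
    apply mul_left_cancel₀ (hne p)
    rw [show ((1:ℂ) + (p:ℂ)^2) * (-(1 + (p:ℂ)^2)⁻¹ *
        (4*(k:ℂ)*(p:ℂ)*(deriv f p) + 2*(k:ℂ)*(2*(k:ℂ)-1)*(f p)))
      = -((1 + (p:ℂ)^2) * (1 + (p:ℂ)^2)⁻¹) *
        (4*(k:ℂ)*(p:ℂ)*(deriv f p) + 2*(k:ℂ)*(2*(k:ℂ)-1)*(f p)) by ring,
      mul_inv_cancel₀ (hne p)]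
    linear_combination -h
  -- the candidate coefficients
  set A : ℂ := f 0 with hA
  set B : ℂ := deriv f 0 with hB
  set C1 : ℂ := ε * ((m:ℂ) * A + I * B) / (2 * (m:ℂ) * I) with hC1
  set C2 : ℂ := ε * (I * B - (m:ℂ) * A) / (2 * (m:ℂ) * I) with hC2
  -- the model solution and its derivative
  set g : ℝ → ℂ := fun p => C1 * ((p:ℂ) + I) ^ m + C2 * ((p:ℂ) + (-I)) ^ m with hg
  set g' : ℝ → ℂ := fun p =>
    C1 * ((m:ℂ) * ((p:ℂ) + I) ^ (m-1)) + C2 * ((m:ℂ) * ((p:ℂ) + (-I)) ^ (m-1)) with hg'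
  have hgd : ∀ p : ℝ, HasDerivAt g (g' p) p := by
    intro p
    exact ((evenHead_zpow_hasDerivAt I hcI m p).const_mul C1).add
      ((evenHead_zpow_hasDerivAt (-I) hcmI m p).const_mul C2)
  have hcast : (((m-1 : ℤ)):ℂ) = (m:ℂ) - 1 := by push_cast; ring
  have hgd' : ∀ p : ℝ, HasDerivAt g'
      (-(1 + (p:ℂ)^2)⁻¹ * (4*(k:ℂ)*(p:ℂ)*(g' p) + 2*(k:ℂ)*(2*(k:ℂ)-1)*(g p))) p := by
    intro p
    have h1 := ((evenHead_zpow_hasDerivAt I hcI (m-1) p).const_mul ((m:ℂ))).const_mul C1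
    have h2 := ((evenHead_zpow_hasDerivAt (-I) hcmI (m-1) p).const_mul ((m:ℂ))).const_mul C2
    have hsum := h1.add h2
    rw [hcast] at hsum
    have hder : HasDerivAt g'
        (C1 * ((m:ℂ) * (((m:ℂ)-1) * ((p:ℂ) + I) ^ (m-1-1)))
          + C2 * ((m:ℂ) * (((m:ℂ)-1) * ((p:ℂ) + (-I)) ^ (m-1-1)))) p := hsum
    convert hder using 1
    have e1 := evenHead_ode_zpow_identity I I_sq hcI k m hm p
    have e2 := evenHead_ode_zpow_identity (-I) (by rw [neg_sq, I_sq]) hcmI k m hm p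
    apply mul_left_cancel₀ (hne p)
    rw [show ((1:ℂ) + (p:ℂ)^2) * (-(1 + (p:ℂ)^2)⁻¹ *
        (4*(k:ℂ)*(p:ℂ)*(g' p) + 2*(k:ℂ)*(2*(k:ℂ)-1)*(g p)))
      = -((1 + (p:ℂ)^2) * (1 + (p:ℂ)^2)⁻¹) *
        (4*(k:ℂ)*(p:ℂ)*(g' p) + 2*(k:ℂ)*(2*(k:ℂ)-1)*(g p)) by ring,
      mul_inv_cancel₀ (hne p)]
    simp only [hg, hg']
    rw [show m - 1 - 1 = m - 2 by ring]
    linear_combination (-C1) * e1 + (-C2) * e2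
  -- initial conditions match
  have hg0 : g 0 = A := by
    simp only [hg, Complex.ofReal_zero, zero_add, hIm, hmIm]
    rw [hC1, hC2]
    exact evenHead_init1 ε A B (m:ℂ) hε2 hmne
  have hg'0 : g' 0 = B := by
    simp only [hg', Complex.ofReal_zero, zero_add, hIpow, hmIpow]
    rw [hC1, hC2]
    have := evenHead_init2 ε A B (m:ℂ) hε2 hmne
    linear_combination this
  -- existence
  have hrep : ∀ p : ℝ, f p = C1 * ((p:ℂ) + I) ^ m + C2 * ((p:ℂ) - I) ^ m := by
    have := evenHead_sol_unique k f g (deriv f) g' hfd hfd' hgd hgd'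
      (by rw [hg0]) (by rw [hg'0])
    intro p
    rw [this p, hg]
    simp only [sub_eq_add_neg]
  refine ⟨(C1, C2), hrep, ?_⟩
  -- uniqueness
  rintro ⟨D1, D2⟩ hD
  have hdiff : ∀ p : ℝ, (D1 - C1) * ((p:ℂ) + I) ^ m + (D2 - C2) * ((p:ℂ) - I) ^ m = 0 := by
    intro p
    linear_combination (hrep p) - (hD p)
  set a : ℂ := D1 - C1 with ha
  set b : ℂ := D2 - C2 with hb
  have h0 := hdiff 0
  rw [show (((0:ℝ):ℂ) + I) = I by simp, show (((0:ℝ):ℂ) - I) = -I by simp, hIm, hmIm] at h0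
  have hab : a = b := by
    have hIε : (I * ε : ℂ) ≠ 0 := mul_ne_zero I_ne_zero hεne
    apply mul_right_cancel₀ hIε
    linear_combination h0
  have h1 := hdiff 1
  have h1I : ((1:ℝ):ℂ) + I = I * (((1:ℝ):ℂ) - I) := by
    push_cast
    have : (I:ℂ) * (1 - I) = I - I^2 := by ring
    rw [this, I_sq]; ring
  rw [h1I, mul_zpow, hab] at h1
  have hfac : b * ((((1:ℝ):ℂ) - I) ^ m * ((I:ℂ) ^ m + 1)) = 0 := by linear_combination h1
  have h1mI : ((1:ℝ):ℂ) - I ≠ 0 := by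
    intro h
    have := congrArg Complex.im h
    simp at this
  have hIm1 : (I:ℂ) ^ m + 1 ≠ 0 := by
    rw [hIm]
    rcases hε with h | h <;> rw [h] <;> intro hcon
    · have := congrArg Complex.im hcon; simp at this
    · have := congrArg Complex.im hcon; simp at this
  have hb0 : b = 0 := by
    rcases mul_eq_zero.mp hfac with h | h
    · exact h
    · rcases mul_eq_zero.mp h with h' | h'
      · exact absurd h' (zpow_ne_zero m h1mI)
      · exact absurd h' hIm1
  have ha0 : a = 0 := hab.trans hb0
  simp only [Prod.mk.injEq]
  constructor
  · rw [← sub_eq_zero]; exact ha0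
  · rw [← sub_eq_zero]; exact hb0
end

section
/- Let k ≥ 1 be an integer and let g : ℝ → ℂ be any C² function satisfying (1 + p²)·g″(p) + 2(2k + 1)·p·g′(p) + 2k(2k + 1)·g(p) = 0 for all p ∈ ℝ. Then there exist unique constants C₃, C₄ ∈ ℂ such that g(p) = C₃·(p − i)^{−2k} + C₄·(p + i)^{−2k} for all p ∈ ℝ; i.e., the solution space of this ODE is exactly the two-dimensional span of (p − i)^{−2k} and (p + i)^{−2k}. -/
open Complex

private lemma oh_ne_add (p : ℝ) : ((p:ℂ) + I) ≠ 0 := by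
  intro h; simpa using congrArg Complex.im h

private lemma oh_ne_sub (p : ℝ) : ((p:ℂ) - I) ≠ 0 := by
  intro h; simpa using congrArg Complex.im h

private lemma oh_hda (j : ℤ) (p : ℝ) :
    HasDerivAt (fun q : ℝ => ((q:ℂ) + I) ^ j) ((j:ℂ) * ((p:ℂ) + I) ^ (j-1)) p := by
  have h1 : HasDerivAt (fun z : ℂ => (z + I) ^ j) ((j:ℂ) * ((p:ℂ) + I) ^ (j-1)) (p:ℂ) := by
    have h0 := (hasDerivAt_zpow j ((p:ℂ)+I) (Or.inl (oh_ne_add p))).comp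
      (p:ℂ) ((hasDerivAt_id ((p:ℂ))).add_const I)
    exact h0.congr_deriv (mul_one _)
  exact h1.comp_ofReal

private lemma oh_hds (j : ℤ) (p : ℝ) :
    HasDerivAt (fun q : ℝ => ((q:ℂ) - I) ^ j) ((j:ℂ) * ((p:ℂ) - I) ^ (j-1)) p := by
  have h1 : HasDerivAt (fun z : ℂ => (z - I) ^ j) ((j:ℂ) * ((p:ℂ) - I) ^ (j-1)) (p:ℂ) := by
    have h0 := (hasDerivAt_zpow j ((p:ℂ)-I) (Or.inl (oh_ne_sub p))).comp
      (p:ℂ) ((hasDerivAt_id ((p:ℂ))).sub_const I)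
    exact h0.congr_deriv (mul_one _)
  exact h1.comp_ofReal

private lemma oh_hdV (k : ℕ) (p : ℝ) :
    HasDerivAt (fun q : ℝ => ((1:ℂ) + (q:ℂ)^2) ^ (2*k+1))
      ((2*(k:ℂ)+1) * ((1:ℂ) + (p:ℂ)^2) ^ (2*k) * (2*(p:ℂ))) p := by
  have h1 := (((hasDerivAt_pow 2 ((p:ℂ))).const_add 1).pow (2*k+1))
  have h2 : HasDerivAt (fun z : ℂ => (1 + z^2) ^ (2*k+1))
      ((2*(k:ℂ)+1) * ((1:ℂ) + (p:ℂ)^2) ^ (2*k) * (2*(p:ℂ))) (p:ℂ) := by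
    refine h1.congr_deriv ?_
    push_cast
    ring_nf
  exact h2.comp_ofReal

/-- the ODE satisfied by `(p+c)^(-2k)` when `c² = -1`. -/
private lemma oh_u_ode (k : ℕ) (c : ℂ) (hc : c ^ 2 = -1) (p : ℝ) (h : (p:ℂ) + c ≠ 0) :
    ((1:ℂ) + (p:ℂ)^2) * ((-2*(k:ℂ)) * ((-2*(k:ℂ)) - 1) * ((p:ℂ)+c) ^ (-(2*(k:ℤ)) - 1 - 1))
      + 2 * (2*(k:ℂ) + 1) * (p:ℂ) * ((-2*(k:ℂ)) * ((p:ℂ)+c) ^ (-(2*(k:ℤ)) - 1))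
      + 2 * (k:ℂ) * (2*(k:ℂ) + 1) * ((p:ℂ)+c) ^ (-(2*(k:ℤ))) = 0 := by
  have e1 := zpow_sub_one₀ h (-(2*(k:ℤ)))
  have e2 := zpow_sub_one₀ h (-(2*(k:ℤ)) - 1)
  rw [e2, e1]
  have hz : ((p:ℂ)+c) * ((p:ℂ)+c)⁻¹ = 1 := mul_inv_cancel₀ h
  linear_combination (2*(k:ℂ)*(2*(k:ℂ)+1) * ((p:ℂ)+c) ^ (-(2*(k:ℤ)))) *
      (((p:ℂ)+c) * ((p:ℂ)+c)⁻¹ - 1 - 2*c*((p:ℂ)+c)⁻¹) * hz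
    + (2*(k:ℂ)*(2*(k:ℂ)+1) * ((p:ℂ)+c) ^ (-(2*(k:ℤ))) * (((p:ℂ)+c)⁻¹)^2) * hc

/-- zpow cancellation: z^(-2k) * z^(2k+1) = z. -/
private lemma oh_canc1 (k : ℕ) (z : ℂ) (hz : z ≠ 0) :
    z ^ (-(2*(k:ℤ))) * z ^ (2*k+1) = z := by
  rw [← zpow_natCast z (2*k+1), ← zpow_add₀ hz]
  norm_num

/-- zpow cancellation: z^(-2k-1) * z^(2k+1) = 1. -/
private lemma oh_canc2 (k : ℕ) (z : ℂ) (hz : z ≠ 0) :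
    z ^ (-(2*(k:ℤ)) - 1) * z ^ (2*k+1) = 1 := by
  rw [← zpow_natCast z (2*k+1), ← zpow_add₀ hz]
  norm_num

private lemma oh_I_pow (k : ℕ) : (I:ℂ) ^ (-(2*(k:ℤ))) = (-1:ℂ)^k := by
  rw [show -(2*(k:ℤ)) = -((2*k : ℕ) : ℤ) by push_cast; ring, zpow_neg, zpow_natCast,
    pow_mul, I_sq, ← inv_pow]
  norm_num

private lemma oh_negI_pow (k : ℕ) : (-I:ℂ) ^ (-(2*(k:ℤ))) = (-1:ℂ)^k := by
  rw [show -(2*(k:ℤ)) = -((2*k : ℕ) : ℤ) by push_cast; ring, zpow_neg, zpow_natCast,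
    pow_mul, show (-I:ℂ)^2 = -1 by rw [neg_sq, I_sq], ← inv_pow]
  norm_num

/-- Every `C²` solution `g : ℝ → ℂ` of `(1 + p²)g″ + 2(2k+1)p·g′ + 2k(2k+1)g = 0`
is a unique complex linear combination of `(p − i)^{−2k}` and `(p + i)^{−2k}`. -/
theorem odd_head_ode_general_solution (k : ℕ) (hk : 1 ≤ k)
    (g : ℝ → ℂ) (hg : ContDiff ℝ 2 g)
    (hode : ∀ p : ℝ,
      ((1 : ℂ) + (p : ℂ) ^ 2) * deriv (deriv g) p
        + 2 * (2 * (k : ℂ) + 1) * (p : ℂ) * deriv g p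
        + 2 * (k : ℂ) * (2 * (k : ℂ) + 1) * g p = 0) :
    ∃! C : ℂ × ℂ, ∀ p : ℝ,
      g p = C.1 * ((p : ℂ) - I) ^ (-(2 * (k : ℤ)))
        + C.2 * ((p : ℂ) + I) ^ (-(2 * (k : ℤ))) := by
  have hkC : (k:ℂ) ≠ 0 := Nat.cast_ne_zero.mpr (by omega)
  have h4k : 4*(k:ℂ)*I ≠ 0 := by
    simp [hkC, I_ne_zero]
  -- differentiability data
  have hgd : Differentiable ℝ g := hg.differentiable (by norm_num)
  have hg2 : ContDiff ℝ (1+1) g := by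
    convert hg using 2 <;> norm_num
  have hgd' : Differentiable ℝ (deriv g) :=
    ((contDiff_succ_iff_deriv.mp hg2).2.2).differentiable (by norm_num)
  have hdg : ∀ p : ℝ, HasDerivAt g (deriv g p) p := fun p => (hgd p).hasDerivAt
  have hddg : ∀ p : ℝ, HasDerivAt (deriv g) (deriv (deriv g) p) p := fun p =>
    (hgd' p).hasDerivAt
  have hmc : ∀ j : ℤ, ((j:ℤ):ℂ) = (j:ℂ) := fun j => rfl
  -- the two Wronskian-type combinations
  set F : ℝ → ℂ := fun p =>
      (g p * ((-2*(k:ℂ)) * ((p:ℂ)+I) ^ (-(2*(k:ℤ)) - 1))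
        - deriv g p * ((p:ℂ)+I) ^ (-(2*(k:ℤ))))
      * ((1:ℂ)+(p:ℂ)^2) ^ (2*k+1) with hFdef
  set G : ℝ → ℂ := fun p =>
      (((p:ℂ)-I) ^ (-(2*(k:ℤ))) * deriv g p
        - (-2*(k:ℂ)) * ((p:ℂ)-I) ^ (-(2*(k:ℤ)) - 1) * g p)
      * ((1:ℂ)+(p:ℂ)^2) ^ (2*k+1) with hGdef
  -- F has derivative zero
  have hFd : ∀ p : ℝ, HasDerivAt F 0 p := by
    intro p
    have hU2' : HasDerivAt (fun q:ℝ => (-2*(k:ℂ)) * ((q:ℂ)+I) ^ (-(2*(k:ℤ)) - 1))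
        ((-2*(k:ℂ)) * (((-(2*(k:ℤ)) - 1 : ℤ):ℂ) * ((p:ℂ)+I) ^ (-(2*(k:ℤ)) - 1 - 1))) p :=
      (oh_hda _ p).const_mul _
    have hU2 := oh_hda (-(2*(k:ℤ))) p
    have H := (((hdg p).mul hU2').sub ((hddg p).mul hU2)).mul (oh_hdV k p)
    have hE : (deriv g p * ((-2*(k:ℂ)) * ((p:ℂ)+I) ^ (-(2*(k:ℤ)) - 1))
          + g p * ((-2*(k:ℂ)) * (((-(2*(k:ℤ)) - 1 : ℤ):ℂ) * ((p:ℂ)+I) ^ (-(2*(k:ℤ)) - 1 - 1)))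
          - (deriv (deriv g) p * ((p:ℂ)+I) ^ (-(2*(k:ℤ)))
            + deriv g p * (((-(2*(k:ℤ)):ℤ):ℂ) * ((p:ℂ)+I) ^ (-(2*(k:ℤ)) - 1))))
          * ((1:ℂ)+(p:ℂ)^2) ^ (2*k+1)
        + (g p * ((-2*(k:ℂ)) * ((p:ℂ)+I) ^ (-(2*(k:ℤ)) - 1))
            - deriv g p * ((p:ℂ)+I) ^ (-(2*(k:ℤ))))
          * ((2*(k:ℂ)+1) * ((1:ℂ)+(p:ℂ)^2) ^ (2*k) * (2*(p:ℂ))) = 0 := by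
      have hu := oh_u_ode k I I_sq p (oh_ne_add p)
      push_cast
      linear_combination (g p * ((1:ℂ)+(p:ℂ)^2) ^ (2*k)) * hu
        - (((p:ℂ)+I) ^ (-(2*(k:ℤ))) * ((1:ℂ)+(p:ℂ)^2) ^ (2*k)) * hode p
    exact hE ▸ H
  -- G has derivative zero
  have hGd : ∀ p : ℝ, HasDerivAt G 0 p := by
    intro p
    have hU1' : HasDerivAt (fun q:ℝ => (-2*(k:ℂ)) * ((q:ℂ)-I) ^ (-(2*(k:ℤ)) - 1))
        ((-2*(k:ℂ)) * (((-(2*(k:ℤ)) - 1 : ℤ):ℂ) * ((p:ℂ)-I) ^ (-(2*(k:ℤ)) - 1 - 1))) p :=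
      (oh_hds _ p).const_mul _
    have hU1 := oh_hds (-(2*(k:ℤ))) p
    have H := (((hU1.mul (hddg p))).sub ((hU1'.mul (hdg p)))).mul (oh_hdV k p)
    have hE : ((((-(2*(k:ℤ)):ℤ):ℂ) * ((p:ℂ)-I) ^ (-(2*(k:ℤ)) - 1)) * deriv g p
          + ((p:ℂ)-I) ^ (-(2*(k:ℤ))) * deriv (deriv g) p
          - (((-2*(k:ℂ)) * (((-(2*(k:ℤ)) - 1 : ℤ):ℂ) * ((p:ℂ)-I) ^ (-(2*(k:ℤ)) - 1 - 1))) * g p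
            + ((-2*(k:ℂ)) * ((p:ℂ)-I) ^ (-(2*(k:ℤ)) - 1)) * deriv g p))
          * ((1:ℂ)+(p:ℂ)^2) ^ (2*k+1)
        + (((p:ℂ)-I) ^ (-(2*(k:ℤ))) * deriv g p
            - (-2*(k:ℂ)) * ((p:ℂ)-I) ^ (-(2*(k:ℤ)) - 1) * g p)
          * ((2*(k:ℂ)+1) * ((1:ℂ)+(p:ℂ)^2) ^ (2*k) * (2*(p:ℂ))) = 0 := by
      have hu := oh_u_ode k (-I) (by rw [neg_sq, I_sq]) p (by rw [← sub_eq_add_neg]; exact oh_ne_sub p)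
      rw [show (p:ℂ) + -I = (p:ℂ) - I by ring] at hu
      push_cast
      linear_combination (((p:ℂ)-I) ^ (-(2*(k:ℤ))) * ((1:ℂ)+(p:ℂ)^2) ^ (2*k)) * hode p
        - (g p * ((1:ℂ)+(p:ℂ)^2) ^ (2*k)) * hu
    exact hE ▸ H
  have hFc : ∀ p : ℝ, F p = F 0 := fun p =>
    is_const_of_deriv_eq_zero (fun q => (hFd q).differentiableAt)
      (fun q => (hFd q).deriv) p 0
  have hGc : ∀ p : ℝ, G p = G 0 := fun p =>
    is_const_of_deriv_eq_zero (fun q => (hGd q).differentiableAt)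
      (fun q => (hGd q).deriv) p 0
  -- key reconstruction identity
  have key : ∀ p : ℝ, F p * ((p:ℂ)-I) ^ (-(2*(k:ℤ))) + G p * ((p:ℂ)+I) ^ (-(2*(k:ℤ)))
      = 4*(k:ℂ)*I * g p := by
    intro p
    have hB : ((1:ℂ)+(p:ℂ)^2) ^ (2*k+1) = ((p:ℂ)-I)^(2*k+1) * ((p:ℂ)+I)^(2*k+1) := by
      rw [← mul_pow]
      congr 1
      linear_combination I_sq
    have r1 := oh_canc1 k ((p:ℂ)-I) (oh_ne_sub p)
    have r2 := oh_canc2 k ((p:ℂ)-I) (oh_ne_sub p)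
    have r3 := oh_canc1 k ((p:ℂ)+I) (oh_ne_add p)
    have r4 := oh_canc2 k ((p:ℂ)+I) (oh_ne_add p)
    rw [hFdef, hGdef]
    simp only []
    rw [hB]
    linear_combination (g p * (-2*(k:ℂ)) * (((p:ℂ)+I) ^ (-(2*(k:ℤ)) - 1) * ((p:ℂ)+I)^(2*k+1))) * r1
      + (g p * (-2*(k:ℂ)) * ((p:ℂ)-I)) * r4
      - (g p * (-2*(k:ℂ)) * (((p:ℂ)-I) ^ (-(2*(k:ℤ)) - 1) * ((p:ℂ)-I)^(2*k+1))) * r3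
      - (g p * (-2*(k:ℂ)) * ((p:ℂ)+I)) * r2
  -- the representation
  have hrep : ∀ p : ℝ,
      g p = (F 0 / (4*(k:ℂ)*I)) * ((p:ℂ)-I) ^ (-(2*(k:ℤ)))
        + (G 0 / (4*(k:ℂ)*I)) * ((p:ℂ)+I) ^ (-(2*(k:ℤ))) := by
    intro p
    have h1 := key p
    rw [hFc p, hGc p] at h1
    rw [div_mul_eq_mul_div, div_mul_eq_mul_div, ← add_div, eq_div_iff h4k]
    linear_combination -h1
  refine ⟨(F 0 / (4*(k:ℂ)*I), G 0 / (4*(k:ℂ)*I)), hrep, ?_⟩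
  rintro ⟨a, b⟩ hab
  -- uniqueness
  have hfun : ∀ p : ℝ, a * ((p:ℂ)-I) ^ (-(2*(k:ℤ))) + b * ((p:ℂ)+I) ^ (-(2*(k:ℤ)))
      = (F 0 / (4*(k:ℂ)*I)) * ((p:ℂ)-I) ^ (-(2*(k:ℤ)))
        + (G 0 / (4*(k:ℂ)*I)) * ((p:ℂ)+I) ^ (-(2*(k:ℤ))) := fun p =>
    (hab p).symm.trans (hrep p)
  set a' := F 0 / (4*(k:ℂ)*I)
  set b' := G 0 / (4*(k:ℂ)*I)
  have hI0 : ((0:ℝ):ℂ) - I = -I := by simp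
  have hI0' : ((0:ℝ):ℂ) + I = I := by simp
  -- value at 0
  have e0 : a * (-1:ℂ)^k + b * (-1:ℂ)^k = a' * (-1:ℂ)^k + b' * (-1:ℂ)^k := by
    have := hfun 0
    rwa [hI0, hI0', oh_I_pow, oh_negI_pow] at this
  -- derivative at 0
  have hd1 : ∀ c d : ℂ, HasDerivAt (fun p : ℝ => c * ((p:ℂ)-I) ^ (-(2*(k:ℤ)))
      + d * ((p:ℂ)+I) ^ (-(2*(k:ℤ))))
      (c * (((-(2*(k:ℤ)):ℤ):ℂ) * (-I) ^ (-(2*(k:ℤ)) - 1))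
        + d * (((-(2*(k:ℤ)):ℤ):ℂ) * I ^ (-(2*(k:ℤ)) - 1))) 0 := by
    intro c d
    have h1 := ((oh_hds (-(2*(k:ℤ))) 0).const_mul c).add ((oh_hda (-(2*(k:ℤ))) 0).const_mul d)
    rwa [hI0, hI0'] at h1
  have e1 : a * (((-(2*(k:ℤ)):ℤ):ℂ) * (-I) ^ (-(2*(k:ℤ)) - 1))
        + b * (((-(2*(k:ℤ)):ℤ):ℂ) * I ^ (-(2*(k:ℤ)) - 1))
      = a' * (((-(2*(k:ℤ)):ℤ):ℂ) * (-I) ^ (-(2*(k:ℤ)) - 1))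
        + b' * (((-(2*(k:ℤ)):ℤ):ℂ) * I ^ (-(2*(k:ℤ)) - 1)) := by
    have hfe : (fun p : ℝ => a * ((p:ℂ)-I) ^ (-(2*(k:ℤ))) + b * ((p:ℂ)+I) ^ (-(2*(k:ℤ))))
        = (fun p : ℝ => a' * ((p:ℂ)-I) ^ (-(2*(k:ℤ))) + b' * ((p:ℂ)+I) ^ (-(2*(k:ℤ)))) :=
      funext hfun
    have d1 := (hd1 a b).deriv
    have d2 := (hd1 a' b').deriv
    rw [hfe] at d1
    rw [d2] at d1
    exact d1.symm
  -- simplify the zpow values at 0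
  have hmI : (-I:ℂ) ^ (-(2*(k:ℤ)) - 1) = (-1:ℂ)^k * I := by
    rw [zpow_sub_one₀ (by simp [I_ne_zero] : (-I:ℂ) ≠ 0), oh_negI_pow, inv_neg, inv_I]
    ring
  have hpI : (I:ℂ) ^ (-(2*(k:ℤ)) - 1) = -((-1:ℂ)^k * I) := by
    rw [zpow_sub_one₀ I_ne_zero, oh_I_pow, inv_I]
    ring
  rw [hmI, hpI] at e1
  have hs : ((-1:ℂ)^k) ≠ 0 := pow_ne_zero _ (by norm_num)
  have hmz : ((-(2*(k:ℤ)):ℤ):ℂ) ≠ 0 := by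
    push_cast
    simpa using hkC
  -- solve the linear system
  have es : a + b = a' + b' := by
    have h2 : (a + b) * (-1:ℂ)^k = (a' + b') * (-1:ℂ)^k := by linear_combination e0
    exact mul_right_cancel₀ hs h2
  have ed : a - b = a' - b' := by
    have h2 : ((-(2*(k:ℤ)):ℤ):ℂ) * (-1:ℂ)^k * I * (a - b)
        = ((-(2*(k:ℤ)):ℤ):ℂ) * (-1:ℂ)^k * I * (a' - b') := by
      linear_combination e1
    exact mul_left_cancel₀ (mul_ne_zero (mul_ne_zero hmz hs) I_ne_zero) h2
  have : a = a' := by linear_combination (es + ed) / 2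
  have : b = b' := by linear_combination (es - ed) / 2
  ext <;> simp_all
end

section
/- The function φ₅ : ℝ² → ℝ, φ₅(p, q) = q·arctan(p), satisfies the symmetry-determining equation of the two-dimensional minimal surface equation: (1 + p²)·∂²φ₅/∂p² + 2pq·∂²φ₅/∂p∂q + (1 + q²)·∂²φ₅/∂q² = 0 for all (p, q) ∈ ℝ². (This is the first nonpolynomial contact symmetry uᵧ·arctan(uₓ) of the minimal surface equation.) -/
open Real ContinuousLinearMap

lemma harctan (z : ℝ × ℝ) :
    HasFDerivAt (fun w : ℝ × ℝ => Real.arctan w.1)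
      ((1 / (1 + z.1 ^ 2)) • (ContinuousLinearMap.fst ℝ ℝ ℝ)) z := by
  have h := (Real.hasDerivAt_arctan z.1).comp_hasFDerivAt z
    (hasFDerivAt_fst (𝕜 := ℝ) (p := z))
  simpa [Function.comp_def] using h

lemma hf (z : ℝ × ℝ) :
    HasFDerivAt (fun w : ℝ × ℝ => w.2 * Real.arctan w.1)
      (z.2 • ((1 / (1 + z.1 ^ 2)) • (ContinuousLinearMap.fst ℝ ℝ ℝ))
        + Real.arctan z.1 • (ContinuousLinearMap.snd ℝ ℝ ℝ)) z :=
  (hasFDerivAt_snd (𝕜 := ℝ) (p := z)).mul (harctan z)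

lemma pxf : px (fun w : ℝ × ℝ => w.2 * Real.arctan w.1)
    = fun z : ℝ × ℝ => z.2 / (1 + z.1 ^ 2) := by
  funext z
  have := (hf z).fderiv
  simp [px, this]
  ring

lemma pyf : py (fun w : ℝ × ℝ => w.2 * Real.arctan w.1)
    = fun z : ℝ × ℝ => Real.arctan z.1 := by
  funext z
  have := (hf z).fderiv
  simp [py, this]

lemma hne (x : ℝ) : (1 : ℝ) + x ^ 2 ≠ 0 := by positivity

lemma hg1 (z : ℝ × ℝ) :
    HasFDerivAt (fun w : ℝ × ℝ => w.2 / (1 + w.1 ^ 2))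
      ((1 / (1 + z.1 ^ 2)) • (ContinuousLinearMap.snd ℝ ℝ ℝ)
        + (-(z.2 * (2 * z.1)) / (1 + z.1 ^ 2) ^ 2) • (ContinuousLinearMap.fst ℝ ℝ ℝ)) z := by
  have hden : HasFDerivAt (fun w : ℝ × ℝ => 1 + w.1 ^ 2)
      ((2 * z.1) • (ContinuousLinearMap.fst ℝ ℝ ℝ)) z := by
    have h := ((hasDerivAt_pow 2 z.1).const_add 1).comp_hasFDerivAt z
      (hasFDerivAt_fst (𝕜 := ℝ) (p := z))
    simpa [mul_comm, Function.comp_def] using h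
  have hinv := (hasDerivAt_inv (hne z.1)).comp_hasFDerivAt z hden
  have h := (hasFDerivAt_snd (𝕜 := ℝ) (p := z)).mul hinv
  have heq : (fun w : ℝ × ℝ => w.2 / (1 + w.1 ^ 2))
      = fun w : ℝ × ℝ => w.2 * (1 + w.1 ^ 2)⁻¹ := by
    funext w; rw [div_eq_mul_inv]
  rw [heq]
  refine h.congr_fderiv ?_
  ext
  all_goals simp [smul_smul, div_eq_mul_inv, Function.comp]
  all_goals ring

/-- The first nonpolynomial contact symmetry `φ₅ = u_y·arctan(u_x)` of the
two-dimensional minimal surface equation: `φ₅(p, q) = q·arctan p` satisfies the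
determining equation `(1 + p²)φ_pp + 2pq·φ_pq + (1 + q²)φ_qq = 0`. -/
theorem phi5_satisfies_determining_equation :
    ∀ z : ℝ × ℝ,
      (1 + z.1 ^ 2) * px (px (fun w : ℝ × ℝ => w.2 * Real.arctan w.1)) z
        + 2 * z.1 * z.2 * py (px (fun w : ℝ × ℝ => w.2 * Real.arctan w.1)) z
        + (1 + z.2 ^ 2) * py (py (fun w : ℝ × ℝ => w.2 * Real.arctan w.1)) z = 0 := by
  intro z
  rw [pxf, pyf]
  have h1 : px (fun z : ℝ × ℝ => z.2 / (1 + z.1 ^ 2)) z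
      = -(z.2 * (2 * z.1)) / (1 + z.1 ^ 2) ^ 2 := by
    simp [px, (hg1 z).fderiv]
  have h2 : py (fun z : ℝ × ℝ => z.2 / (1 + z.1 ^ 2)) z = 1 / (1 + z.1 ^ 2) := by
    simp [py, (hg1 z).fderiv]
  have h3 : py (fun z : ℝ × ℝ => Real.arctan z.1) z = 0 := by
    simp [py, (harctan z).fderiv]
  rw [h1, h2, h3]
  field_simp
  ring
end
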